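/- arXiv:2006.06486 — 6 statements merged into one kernel-verified Lean document; each statement's English description precedes it below -/
import Mathlib

section
/- Let (A_i)_{i≥1} be i.i.d. Bernoulli(2δ) with δ ∈ (0,1/16), and (G_i)_{i≥1} i.i.d. geometric random variables on ℕ₀ with P(G_1 = k) = 2^{-(k+1)}, independent of the A_i. Then for every k ∈ ℕ and j ∈ ℕ, P(Σ_{i=1}^k A_i (G_i + 1) > k - j) ≤ (3/2)^j (5/6)^k. -/
open MeasureTheory ProbabilityTheory
open scoped ENNReal NNReal

/-- Chernoff bound: if `(A_i)` are i.i.d. Bernoulli(2δ) with `δ ∈ (0,1/16)` and `(G_i)` are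
i.i.d. geometric on `ℕ₀` with `P(G_i = k) = 2^{-(k+1)}`, all independent, then for `k, j ≥ 1`,
`P(Σ_{i=1}^k A_i (G_i + 1) > k - j) ≤ (3/2)^j (5/6)^k`. -/
theorem stmt_5 {Ω : Type*} [MeasurableSpace Ω] (P : Measure Ω) [IsProbabilityMeasure P]
    (δ : ℝ) (hδ : δ ∈ Set.Ioo (0 : ℝ) (1 / 16))
    (A G : ℕ → Ω → ℕ)
    (hAmeas : ∀ i, Measurable (A i)) (hGmeas : ∀ i, Measurable (G i))
    (hA01 : ∀ i ω, A i ω ≤ 1)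
    (hA : ∀ i, P {ω | A i ω = 1} = ENNReal.ofReal (2 * δ))
    (hG : ∀ i k, P {ω | G i ω = k} = ENNReal.ofReal ((1 / 2 : ℝ) ^ (k + 1)))
    (hindep : iIndepFun (fun (i : ℕ) (ω : Ω) => (A i ω, G i ω)) P)
    (hAG : ∀ i, IndepFun (A i) (G i) P)
    (k j : ℕ) (hk : 1 ≤ k) (hj : 1 ≤ j) :
    (P {ω | (k : ℝ) - j < ∑ i ∈ Finset.range k, (A i ω : ℝ) * ((G i ω : ℝ) + 1)}).toReal
      ≤ (3 / 2 : ℝ) ^ j * (5 / 6 : ℝ) ^ k := by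
  obtain ⟨hδ0, hδ1⟩ := hδ
  rcases lt_or_ge k j with hjk | hjk
  · -- trivial case : RHS ≥ 1
    have h1 : (P {ω | (k : ℝ) - j <
        ∑ i ∈ Finset.range k, (A i ω : ℝ) * ((G i ω : ℝ) + 1)}).toReal ≤ 1 := by
      have h := prob_le_one (μ := P) (s := {ω | (k : ℝ) - j <
        ∑ i ∈ Finset.range k, (A i ω : ℝ) * ((G i ω : ℝ) + 1)})
      have := ENNReal.toReal_mono ENNReal.one_ne_top h
      simpa using this
    refine h1.trans ?_
    calc (1 : ℝ) ≤ (5/4 : ℝ) ^ k := one_le_pow₀ (by norm_num)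
      _ = (3/2 : ℝ) ^ k * (5/6 : ℝ) ^ k := by rw [← mul_pow]; norm_num
      _ ≤ (3/2 : ℝ) ^ j * (5/6 : ℝ) ^ k :=
          mul_le_mul_of_nonneg_right (pow_le_pow_right₀ (by norm_num) hjk.le) (by positivity)
  · -- main case
    set φ : ℕ × ℕ → ℝ≥0∞ := fun p => ENNReal.ofReal ((3/2 : ℝ) ^ (p.1 * (p.2 + 1))) with hφ
    set f : ℕ → Ω → ℝ≥0∞ := fun i ω => φ (A i ω, G i ω) with hf
    have hφm : Measurable φ := measurable_of_countable φ
    have hZm : ∀ i, Measurable fun ω => (A i ω, G i ω) :=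
      fun i => (hAmeas i).prodMk (hGmeas i)
    have hfm : ∀ i, Measurable (f i) := fun i => hφm.comp (hZm i)
    have hfind : iIndepFun f P :=
      hindep.comp (fun _ => φ) (fun _ => hφm)
    -- expectation of a single factor
    have hexp : ∀ i, ∫⁻ ω, f i ω ∂P = ENNReal.ofReal (1 + 4 * δ) := by
      intro i
      have h1 : ∫⁻ ω, f i ω ∂P
          = ∑' p : ℕ × ℕ, φ p * (P.map (fun ω => (A i ω, G i ω))) {p} := by
        rw [← lintegral_map hφm (hZm i), lintegral_countable']
      have h2 : ∀ a m : ℕ, (P.map (fun ω => (A i ω, G i ω))) {(a, m)}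
          = P {ω | A i ω = a} * P {ω | G i ω = m} := by
        intro a m
        rw [Measure.map_apply (hZm i) (measurableSet_singleton _)]
        have hset : (fun ω => (A i ω, G i ω)) ⁻¹' {(a, m)}
            = (A i ⁻¹' {a}) ∩ (G i ⁻¹' {m}) := by
          ext ω; simp [Prod.ext_iff]
        rw [hset, (hAG i).measure_inter_preimage_eq_mul _ _ (measurableSet_singleton a)
          (measurableSet_singleton m)]
        rfl
      have hA0 : P {ω | A i ω = 0} = 1 - ENNReal.ofReal (2 * δ) := by
        have hset : {ω | A i ω = 0} = {ω | A i ω = 1}ᶜ := by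
          ext ω; have := hA01 i ω; simp only [Set.mem_setOf_eq, Set.mem_compl_iff]; omega
        have hms : MeasurableSet {ω | A i ω = 1} := hAmeas i (measurableSet_singleton 1)
        rw [hset, prob_compl_eq_one_sub hms, hA i]
      have hAbig : ∀ a : ℕ, a ∉ ({0, 1} : Finset ℕ) → P {ω | A i ω = a} = 0 := by
        intro a ha
        have : {ω | A i ω = a} = ∅ := by
          ext ω; have := hA01 i ω
          simp only [Set.mem_setOf_eq, Set.mem_empty_iff_false, iff_false]
          simp only [Finset.mem_insert, Finset.mem_singleton] at ha
          omega
        simp [this]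
      have hGsum : ∑' m : ℕ, P {ω | G i ω = m} = 1 := by
        have huniv : ⋃ m : ℕ, {ω | G i ω = m} = Set.univ := by
          ext ω; simp
        have hdisj : Pairwise (Function.onFun Disjoint fun m => {ω | G i ω = m}) := by
          intro m n hmn
          rw [Function.onFun, Set.disjoint_left]
          rintro ω h1 h2
          exact hmn (h1.symm.trans h2)
        rw [← measure_iUnion hdisj (fun m => hGmeas i (measurableSet_singleton m)), huniv]
        simp
      have hsplit : ∑' p : ℕ × ℕ, φ p * (P.map (fun ω => (A i ω, G i ω))) {p}
          = ∑' a : ℕ, ∑' m : ℕ, φ (a, m) * (P.map (fun ω => (A i ω, G i ω))) {(a, m)} := by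
        rw [← ENNReal.tsum_prod]
      rw [h1, hsplit]
      simp_rw [h2]
      rw [tsum_eq_sum (s := ({0, 1} : Finset ℕ))
        (fun a ha => by simp [hAbig a ha])]
      rw [Finset.sum_insert (by norm_num), Finset.sum_singleton]
      have hT0 : (∑' m : ℕ, φ (0, m) * (P {ω | A i ω = 0} * P {ω | G i ω = m}))
          = 1 - ENNReal.ofReal (2 * δ) := by
        have hφ0 : ∀ m : ℕ, φ (0, m) = 1 := by intro m; simp [hφ]
        simp_rw [hφ0, one_mul, ENNReal.tsum_mul_left, hGsum, mul_one, hA0]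
      have hT1 : (∑' m : ℕ, φ (1, m) * (P {ω | A i ω = 1} * P {ω | G i ω = m}))
          = ENNReal.ofReal (6 * δ) := by
        have hterm : ∀ m : ℕ, φ (1, m) * (P {ω | A i ω = 1} * P {ω | G i ω = m})
            = ENNReal.ofReal ((2 * δ * (3/4)) * (3/4 : ℝ) ^ m) := by
          intro m
          rw [hA i, hG i m, hφ]
          simp only [one_mul]
          rw [← ENNReal.ofReal_mul (by positivity), ← ENNReal.ofReal_mul (by positivity)]
          congr 1
          have : (3/2 : ℝ) ^ (m + 1) * (2 * δ * (1/2 : ℝ) ^ (m + 1))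
              = (2 * δ) * ((3/2 : ℝ) * (1/2)) ^ (m + 1) := by
            rw [mul_pow]; ring
          rw [this]
          norm_num [pow_succ]
          ring
        simp_rw [hterm]
        rw [← ENNReal.ofReal_tsum_of_nonneg (fun m => by positivity)
          ((summable_geometric_of_lt_one (by norm_num) (by norm_num)).mul_left _)]
        congr 1
        rw [tsum_mul_left, tsum_geometric_of_lt_one (by norm_num) (by norm_num)]
        norm_num
        ring
      rw [hT0, hT1]
      have h2δ : ENNReal.ofReal (2 * δ) ≤ 1 := by
        rw [← ENNReal.ofReal_one]
        exact ENNReal.ofReal_le_ofReal (by linarith)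
      rw [← ENNReal.ofReal_one, ← ENNReal.ofReal_sub _ (by positivity),
        ← ENNReal.ofReal_add (by linarith) (by positivity)]
      congr 1
      ring
    -- product of independent factors
    have hprod : ∀ n : ℕ, ∫⁻ ω, ∏ i ∈ Finset.range n, f i ω ∂P
        = ∏ i ∈ Finset.range n, ∫⁻ ω, f i ω ∂P := by
      intro n
      induction n with
      | zero => simp
      | succ n ih =>
        have hi : IndepFun (∏ i ∈ Finset.range n, f i) (f n) P :=
          hfind.indepFun_prod_range_succ hfm n
        have hi' : IndepFun (fun ω => ∏ i ∈ Finset.range n, f i ω) (f n) P := by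
          have hfun : (fun ω => ∏ i ∈ Finset.range n, f i ω)
              = ∏ i ∈ Finset.range n, f i := by
            funext ω; simp
          rw [hfun]; exact hi
        have hmain := lintegral_mul_eq_lintegral_mul_lintegral_of_indepFun
          (μ := P) (Finset.measurable_prod _ fun i _ => hfm i) (hfm n) hi'
        simp only [Pi.mul_apply, Finset.prod_apply] at hmain
        simp only [Finset.prod_range_succ]
        rw [hmain, ih]
    -- the product equals ofReal of (3/2)^N
    set N : Ω → ℕ := fun ω => ∑ i ∈ Finset.range k, A i ω * (G i ω + 1) with hN
    have hprodf : ∀ ω, ∏ i ∈ Finset.range k, f i ω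
        = ENNReal.ofReal ((3/2 : ℝ) ^ N ω) := by
      intro ω
      simp only [hf, hφ]
      rw [← ENNReal.ofReal_prod_of_nonneg (fun i _ => by positivity)]
      congr 1
      rw [Finset.prod_pow_eq_pow_sum]
    set n := k - j with hn
    set c : ℝ≥0∞ := ENNReal.ofReal ((3/2 : ℝ) ^ n) with hc
    have hsub : {ω | (k : ℝ) - j < ∑ i ∈ Finset.range k, (A i ω : ℝ) * ((G i ω : ℝ) + 1)}
        ⊆ {ω | c ≤ ∏ i ∈ Finset.range k, f i ω} := by
      intro ω hω
      simp only [Set.mem_setOf_eq] at hω ⊢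
      rw [hprodf ω, hc]
      apply ENNReal.ofReal_le_ofReal
      apply pow_le_pow_right₀ (by norm_num : (1:ℝ) ≤ 3/2)
      have hcast : ((N ω : ℕ) : ℝ)
          = ∑ i ∈ Finset.range k, (A i ω : ℝ) * ((G i ω : ℝ) + 1) := by
        rw [hN]; push_cast; ring
      have hnr : ((n : ℕ) : ℝ) = (k : ℝ) - j := by
        rw [hn]; push_cast [hjk]; ring
      have : ((n : ℕ) : ℝ) < ((N ω : ℕ) : ℝ) := by rw [hcast, hnr]; exact hω
      exact_mod_cast this.le
    have hmeasprod : Measurable fun ω => ∏ i ∈ Finset.range k, f i ω :=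
      Finset.measurable_prod _ fun i _ => hfm i
    have hmarkov := mul_meas_ge_le_lintegral₀ (μ := P) hmeasprod.aemeasurable c
    have hlint : ∫⁻ ω, ∏ i ∈ Finset.range k, f i ω ∂P ≤ ENNReal.ofReal ((5/4 : ℝ) ^ k) := by
      rw [hprod k]
      calc ∏ i ∈ Finset.range k, ∫⁻ ω, f i ω ∂P
          ≤ ∏ _i ∈ Finset.range k, ENNReal.ofReal (5/4 : ℝ) :=
            Finset.prod_le_prod' fun i _ => by
              rw [hexp i]; exact ENNReal.ofReal_le_ofReal (by linarith)
        _ = ENNReal.ofReal ((5/4 : ℝ) ^ k) := by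
            rw [Finset.prod_const, Finset.card_range, ← ENNReal.ofReal_pow (by norm_num)]
    have hc0 : c ≠ 0 := by
      rw [hc]; exact (ENNReal.ofReal_pos.mpr (by positivity)).ne'
    have hctop : c ≠ ⊤ := by rw [hc]; exact ENNReal.ofReal_ne_top
    have hP : P {ω | (k : ℝ) - j < ∑ i ∈ Finset.range k, (A i ω : ℝ) * ((G i ω : ℝ) + 1)}
        ≤ ENNReal.ofReal ((5/4 : ℝ) ^ k / (3/2 : ℝ) ^ n) := by
      refine (measure_mono hsub).trans ?_
      rw [ENNReal.ofReal_div_of_pos (by positivity), ← hc,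
        ENNReal.le_div_iff_mul_le (Or.inl hc0) (Or.inl hctop), mul_comm]
      exact hmarkov.trans hlint
    have hfinal : (P {ω | (k : ℝ) - j
        < ∑ i ∈ Finset.range k, (A i ω : ℝ) * ((G i ω : ℝ) + 1)}).toReal
        ≤ (5/4 : ℝ) ^ k / (3/2 : ℝ) ^ n := by
      have := ENNReal.toReal_mono ENNReal.ofReal_ne_top hP
      rwa [ENNReal.toReal_ofReal (by positivity)] at this
    refine hfinal.trans_eq ?_
    rw [div_eq_iff (by positivity : ((3:ℝ)/2) ^ n ≠ 0)]
    have hek : (3/2 : ℝ) ^ j * (3/2 : ℝ) ^ n = (3/2 : ℝ) ^ k := by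
      rw [← pow_add]; congr 1; omega
    calc (5/4 : ℝ) ^ k = (3/2 : ℝ) ^ k * (5/6 : ℝ) ^ k := by rw [← mul_pow]; norm_num
      _ = ((3/2 : ℝ) ^ j * (3/2 : ℝ) ^ n) * (5/6 : ℝ) ^ k := by rw [hek]
      _ = (3/2 : ℝ) ^ j * (5/6 : ℝ) ^ k * (3/2 : ℝ) ^ n := by ring
end

section
/- Let (Y_n)_{n≥0} be the Markov chain on ℕ₀ with transition probabilities: from state 0, it stays at 0 with probability 1-δ and jumps to j ≥ 1 with probability δ 2^{-j}; from state i ≥ 1, it moves to i-1 with probability 1-2δ and to i+j (j ≥ 0) with probability δ 2^{-j}, where δ ∈ (0, 1/16). Let m_j be the expected first return/hitting time of state 0 started from j. Then m_j ≤ 1 + 5·(3/2)^j for every j ≥ 1, and m_0 ≤ 1 + 15δ. -/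
open MeasureTheory
open scoped ENNReal
set_option maxHeartbeats 1600000

/-- The transition probabilities of the comparison Markov chain on `ℕ₀`:
from `0`, stay at `0` with probability `1-δ` and jump to `j ≥ 1` with probability `δ 2^{-j}`;
from `i ≥ 1`, move to `i-1` with probability `1-2δ` and to `i+j` (`j ≥ 0`)
with probability `δ 2^{-j}`. -/
noncomputable def pKer (δ : ℝ) (i j : ℕ) : ℝ :=
  if i = 0 then (if j = 0 then 1 - δ else δ * (1 / 2) ^ j)
  else if j + 1 = i then 1 - 2 * δ
  else if i ≤ j then δ * (1 / 2) ^ (j - i)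
  else 0

lemma pKer_nonneg {δ : ℝ} (h0 : 0 < δ) (h1 : δ < 1/16) (i j : ℕ) : 0 ≤ pKer δ i j := by
  unfold pKer
  split_ifs <;> first | linarith | positivity

lemma meanfun_zero (δ : ℝ) :
    (fun j : ℕ => (j : ℝ) * pKer δ 0 j) = fun j : ℕ => δ * ((j : ℝ) * (1/2)^j) := by
  funext j
  rcases Nat.eq_zero_or_pos j with hj | hj
  · subst hj; simp [pKer]
  · have : j ≠ 0 := hj.ne'
    simp [pKer, this]
    ring

lemma summable_mul_half : Summable (fun j : ℕ => (j : ℝ) * (1/2)^j) := by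
  have := summable_pow_mul_geometric_of_norm_lt_one (R := ℝ) 1 (r := 1/2) (by norm_num)
  simpa using this

lemma tsum_mul_half : ∑' j : ℕ, (j : ℝ) * (1/2)^j = 2 := by
  have := tsum_coe_mul_geometric_of_norm_lt_one (𝕜 := ℝ) (r := 1/2) (by norm_num)
  rw [this]; norm_num

lemma summable_mean_zero (δ : ℝ) : Summable (fun j : ℕ => (j : ℝ) * pKer δ 0 j) := by
  rw [meanfun_zero]
  exact summable_mul_half.mul_left δ

lemma tsum_mean_zero (δ : ℝ) : ∑' j : ℕ, (j : ℝ) * pKer δ 0 j = 2 * δ := by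
  rw [meanfun_zero, tsum_mul_left, tsum_mul_half]; ring

lemma pKer_shift (δ : ℝ) {i : ℕ} (hi : 1 ≤ i) (k : ℕ) :
    pKer δ i (k + i) = δ * (1/2)^k := by
  have h1 : i ≠ 0 := by omega
  have h2 : k + i + 1 ≠ i := by omega
  have h3 : i ≤ k + i := by omega
  simp [pKer, h1, h2, h3]

lemma summable_mean_pos (δ : ℝ) {i : ℕ} (hi : 1 ≤ i) :
    Summable (fun j : ℕ => (j : ℝ) * pKer δ i j) := by
  rw [← summable_nat_add_iff i]
  have : (fun k : ℕ => ((k + i : ℕ) : ℝ) * pKer δ i (k + i))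
      = fun k : ℕ => δ * ((k : ℝ) * (1/2)^k) + (i * δ) * (1/2)^k := by
    funext k; rw [pKer_shift δ hi k]; push_cast; ring
  rw [this]
  exact (summable_mul_half.mul_left δ).add ((summable_geometric_of_lt_one (by norm_num) (by norm_num)).mul_left _)

lemma tsum_mean_pos (δ : ℝ) {i : ℕ} (hi : 1 ≤ i) :
    ∑' j : ℕ, (j : ℝ) * pKer δ i j = (i : ℝ) - 1 + 4 * δ := by
  have hs := summable_mean_pos δ hi
  rw [← Summable.sum_add_tsum_nat_add i hs]
  have h1 : ∑ j ∈ Finset.range i, (j : ℝ) * pKer δ i j = ((i : ℝ) - 1) * (1 - 2*δ) := by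
    have hii : i - 1 < i := by omega
    rw [Finset.sum_eq_single (i - 1)]
    · have h1 : i ≠ 0 := by omega
      have h2 : i - 1 + 1 = i := by omega
      simp only [pKer, if_neg h1, if_pos h2]
      push_cast [Nat.cast_sub hi]
      ring
    · intro j hj hji
      have hj' : j < i := Finset.mem_range.mp hj
      have h1 : i ≠ 0 := by omega
      have h2 : j + 1 ≠ i := by omega
      have h3 : ¬ (i ≤ j) := by omega
      simp [pKer, h1, h2, h3]
    · intro h; exact absurd (Finset.mem_range.mpr hii) h
  have h2 : ∑' k : ℕ, ((k + i : ℕ) : ℝ) * pKer δ i (k + i) = 2 * δ + (i : ℝ) * δ * 2 := by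
    have : (fun k : ℕ => ((k + i : ℕ) : ℝ) * pKer δ i (k + i))
        = fun k : ℕ => δ * ((k : ℝ) * (1/2)^k) + ((i : ℝ) * δ) * (1/2)^k := by
      funext k; rw [pKer_shift δ hi k]; push_cast; ring
    rw [this, Summable.tsum_add (summable_mul_half.mul_left δ)
        ((summable_geometric_of_lt_one (by norm_num) (by norm_num)).mul_left _),
      tsum_mul_left, tsum_mul_left, tsum_mul_half,
      tsum_geometric_of_lt_one (by norm_num) (by norm_num)]
    norm_num
    ring
  rw [h1, h2]; ring

lemma mean_ennreal {δ : ℝ} (h0 : 0 < δ) (h1 : δ < 1/16) (i : ℕ) :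
    ∑' j : ℕ, (j : ℝ≥0∞) * ENNReal.ofReal (pKer δ i j)
      = ENNReal.ofReal (if i = 0 then 2 * δ else (i : ℝ) - 1 + 4 * δ) := by
  have hsum : Summable (fun j : ℕ => (j : ℝ) * pKer δ i j) := by
    rcases Nat.eq_zero_or_pos i with hi | hi
    · subst hi; exact summable_mean_zero δ
    · exact summable_mean_pos δ hi
  have hnn : ∀ j : ℕ, 0 ≤ (j : ℝ) * pKer δ i j :=
    fun j => mul_nonneg (Nat.cast_nonneg j) (pKer_nonneg h0 h1 i j)
  have key : ENNReal.ofReal (∑' j : ℕ, (j : ℝ) * pKer δ i j)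
      = ∑' j : ℕ, (j : ℝ≥0∞) * ENNReal.ofReal (pKer δ i j) := by
    rw [ENNReal.ofReal_tsum_of_nonneg hnn hsum]
    congr 1; funext j
    rw [ENNReal.ofReal_mul (Nat.cast_nonneg j), ENNReal.ofReal_natCast]
  rw [← key]
  rcases Nat.eq_zero_or_pos i with hi | hi
  · subst hi; rw [tsum_mean_zero]; simp
  · rw [tsum_mean_pos δ hi, if_neg (by omega)]

theorem stmt_6' {Ω : Type*} [MeasurableSpace Ω] (P : Measure Ω) [IsProbabilityMeasure P]
    (δ : ℝ) (hδ : δ ∈ Set.Ioo (0 : ℝ) (1 / 16))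
    (Y : ℕ → Ω → ℕ) (hYmeas : ∀ n, Measurable (Y n))
    (hMarkov : ∀ (n i j : ℕ) (B : (Fin (n + 1) → ℕ) → Prop),
      P ({ω | Y (n + 1) ω = j} ∩ {ω | Y n ω = i} ∩ {ω | B (fun k => Y k ω)})
        = ENNReal.ofReal (pKer δ i j) * P ({ω | Y n ω = i} ∩ {ω | B (fun k => Y k ω)}))
    (x : ℕ) (hstart : ∀ ω, Y 0 ω = x) :
    (1 ≤ x →
      ∫⁻ ω, (⨅ n ∈ {n : ℕ | 1 ≤ n ∧ Y n ω = 0}, (n : ℝ≥0∞)) ∂P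
        ≤ ENNReal.ofReal (1 + 5 * (3 / 2 : ℝ) ^ x)) ∧
    (x = 0 →
      ∫⁻ ω, (⨅ n ∈ {n : ℕ | 1 ≤ n ∧ Y n ω = 0}, (n : ℝ≥0∞)) ∂P
        ≤ ENNReal.ofReal (1 + 15 * δ)) := by
  obtain ⟨hδ0, hδ1⟩ := hδ
  -- the events "T > n"
  set G : ℕ → Set Ω := fun n => {ω | ∀ m, 1 ≤ m → m ≤ n → Y m ω ≠ 0} with hGdef
  have hGmeas : ∀ n, MeasurableSet (G n) := by
    intro n
    have : G n = ⋂ (m : ℕ), ⋂ (_ : 1 ≤ m), ⋂ (_ : m ≤ n), (Y m ⁻¹' {0})ᶜ := by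
      ext ω; simp [hGdef, Set.mem_iInter]
    rw [this]
    exact MeasurableSet.iInter fun m => MeasurableSet.iInter fun _ =>
      MeasurableSet.iInter fun _ => ((hYmeas m) (measurableSet_singleton 0)).compl
  have hYset : ∀ n i, MeasurableSet {ω | Y n ω = i} := by
    intro n i
    exact (hYmeas n) (measurableSet_singleton i)
  set a : ℕ → ℕ → ℝ≥0∞ := fun n i => P ({ω | Y n ω = i} ∩ G n) with hadef
  -- Markov property specialized to the events G n
  have hM : ∀ n i j, P ({ω | Y (n + 1) ω = j} ∩ {ω | Y n ω = i} ∩ G n)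
      = ENNReal.ofReal (pKer δ i j) * a n i := by
    intro n i j
    have h := hMarkov n i j (fun f => ∀ m : Fin (n + 1), 1 ≤ (m : ℕ) → f m ≠ 0)
    have hBG : {ω | ∀ m : Fin (n + 1), 1 ≤ (m : ℕ) → Y m ω ≠ 0} = G n := by
      ext ω
      simp only [Set.mem_setOf_eq, hGdef]
      constructor
      · intro h m hm1 hmn
        exact h ⟨m, by omega⟩ hm1
      · intro h m hm1
        exact h m hm1 (by omega)
    rw [hBG] at h
    exact h
  -- partition over values of Y n
  have hpart : ∀ (n : ℕ) (A : Set Ω), MeasurableSet A →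
      P A = ∑' i : ℕ, P (A ∩ {ω | Y n ω = i}) := by
    intro n A hA
    have hU : A = ⋃ i : ℕ, A ∩ {ω | Y n ω = i} := by
      ext ω; simp only [Set.mem_iUnion, Set.mem_inter_iff, Set.mem_setOf_eq]
      exact ⟨fun h => ⟨Y n ω, h, rfl⟩, fun ⟨i, h, _⟩ => h⟩
    have hd : Pairwise (Function.onFun Disjoint (fun i => A ∩ {ω | Y n ω = i})) := by
      intro i j hij
      simp only [Function.onFun, Set.disjoint_left]
      rintro ω ⟨-, h1⟩ ⟨-, h2⟩
      exact hij (h1 ▸ h2 ▸ rfl)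
    have hme := measure_iUnion (μ := P) hd (fun i => hA.inter (hYset n i))
    rw [← hU] at hme
    exact hme
  set q : ℕ → ℝ≥0∞ := fun n => P (G n) with hqdef
  set r : ℕ → ℝ≥0∞ := fun n => ∑' i : ℕ, a n (i + 1) with hrdef
  set u : ℕ → ℝ≥0∞ := fun n => ∑' i : ℕ, (i : ℝ≥0∞) * a n i with hudef
  set c : ℝ≥0∞ := ENNReal.ofReal (1 - 4 * δ) with hcdef
  set d : ℝ≥0∞ := ENNReal.ofReal (2 * δ) with hddef
  -- step 1 : u (n+1) as a sum over the previous state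
  have hstep1 : ∀ n, u (n + 1)
      = ∑' i : ℕ, ENNReal.ofReal (if i = 0 then 2 * δ else (i : ℝ) - 1 + 4 * δ) * a n i := by
    intro n
    have h1 : ∀ j : ℕ, (j : ℝ≥0∞) * a (n + 1) j
        = (j : ℝ≥0∞) * P ({ω | Y (n + 1) ω = j} ∩ G n) := by
      intro j
      rcases Nat.eq_zero_or_pos j with hj | hj
      · subst hj; simp
      · have hseteq : {ω | Y (n + 1) ω = j} ∩ G (n + 1) = {ω | Y (n + 1) ω = j} ∩ G n := by
          ext ω
          simp only [Set.mem_inter_iff, Set.mem_setOf_eq, hGdef]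
          constructor
          · rintro ⟨hY, hall⟩
            exact ⟨hY, fun m hm1 hmn => hall m hm1 (by omega)⟩
          · rintro ⟨hY, hall⟩
            refine ⟨hY, fun m hm1 hmn => ?_⟩
            rcases Nat.lt_or_ge m (n + 1) with h | h
            · exact hall m hm1 (by omega)
            · have : m = n + 1 := by omega
              subst this
              rw [hY]; omega
        rw [hadef]
        simp only
        rw [hseteq]
    have h2 : ∀ j : ℕ, P ({ω | Y (n + 1) ω = j} ∩ G n)
        = ∑' i : ℕ, ENNReal.ofReal (pKer δ i j) * a n i := by
      intro j
      rw [hpart n _ (((hYset (n+1) j)).inter (hGmeas n))]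
      congr 1; funext i
      rw [← hM n i j]
      congr 1
      ext ω
      simp only [Set.mem_inter_iff, Set.mem_setOf_eq]
      tauto
    calc u (n + 1) = ∑' j : ℕ, (j : ℝ≥0∞) * P ({ω | Y (n + 1) ω = j} ∩ G n) := by
          rw [hudef]; exact tsum_congr h1
      _ = ∑' j : ℕ, ∑' i : ℕ, (j : ℝ≥0∞) * (ENNReal.ofReal (pKer δ i j) * a n i) := by
          refine tsum_congr fun j => ?_
          rw [h2 j, ENNReal.tsum_mul_left]
      _ = ∑' i : ℕ, ∑' j : ℕ, (j : ℝ≥0∞) * (ENNReal.ofReal (pKer δ i j) * a n i) :=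
          ENNReal.tsum_comm
      _ = ∑' i : ℕ, (∑' j : ℕ, (j : ℝ≥0∞) * ENNReal.ofReal (pKer δ i j)) * a n i := by
          refine tsum_congr fun i => ?_
          rw [← ENNReal.tsum_mul_right]
          exact tsum_congr fun j => (mul_assoc _ _ _).symm
      _ = _ := by
          refine tsum_congr fun i => ?_
          rw [mean_ennreal hδ0 hδ1 i]
  -- step 2 : the key drift identity
  have key : ∀ n, u (n + 1) + c * r n = d * a n 0 + u n := by
    intro n
    have e1 : (∑' i : ℕ, ENNReal.ofReal (if i = 0 then 2 * δ else (i : ℝ) - 1 + 4 * δ) * a n i)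
        = ENNReal.ofReal (2 * δ) * a n 0
          + ∑' i : ℕ, ENNReal.ofReal ((i : ℝ) + 4 * δ) * a n (i + 1) := by
      rw [tsum_eq_zero_add' (f := fun i : ℕ =>
        ENNReal.ofReal (if i = 0 then 2 * δ else (i : ℝ) - 1 + 4 * δ) * a n i) ENNReal.summable]
      have hterm : ∀ i : ℕ,
          ENNReal.ofReal (if i + 1 = 0 then 2 * δ else ((i + 1 : ℕ) : ℝ) - 1 + 4 * δ) * a n (i + 1)
            = ENNReal.ofReal ((i : ℝ) + 4 * δ) * a n (i + 1) := by
        intro i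
        rw [if_neg (Nat.succ_ne_zero i)]
        congr 2
        push_cast
        ring
      rw [if_pos rfl, tsum_congr hterm]
    have e0 : u n = ∑' i : ℕ, ((i : ℝ≥0∞) + 1) * a n (i + 1) := by
      rw [hudef]
      simp only
      rw [tsum_eq_zero_add' (f := fun i : ℕ => (i : ℝ≥0∞) * a n i) ENNReal.summable]
      simp only [Nat.cast_zero, zero_mul, zero_add]
      refine tsum_congr fun i => ?_
      congr 1
      push_cast
      ring
    have hsplit : (∑' i : ℕ, ENNReal.ofReal ((i : ℝ) + 4 * δ) * a n (i + 1)) + c * r n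
        = ∑' i : ℕ, ((i : ℝ≥0∞) + 1) * a n (i + 1) := by
      rw [hrdef]
      simp only
      rw [← ENNReal.tsum_mul_left, ← ENNReal.tsum_add]
      refine tsum_congr fun i => ?_
      rw [← add_mul]
      congr 1
      rw [hcdef, ← ENNReal.ofReal_add
        (by have := Nat.cast_nonneg (α := ℝ) i; linarith) (by linarith)]
      have h4 : (i : ℝ) + 4 * δ + (1 - 4 * δ) = (i : ℝ) + 1 := by ring
      rw [h4, ENNReal.ofReal_add (Nat.cast_nonneg i) (by norm_num), ENNReal.ofReal_natCast,
        ENNReal.ofReal_one]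
    rw [hstep1 n, e1, ← hddef, add_assoc, hsplit, ← e0]
  -- basic facts
  have ha_le_one : ∀ n i, a n i ≤ 1 := fun n i => prob_le_one
  have ha0 : ∀ i, a 0 i = if i = x then 1 else 0 := by
    intro i
    have hG0 : G 0 = Set.univ := by
      ext ω
      simp only [hGdef, Set.mem_setOf_eq, Set.mem_univ, iff_true]
      intro m h1 h2; omega
    have hY0 : {ω : Ω | Y 0 ω = i} = if i = x then Set.univ else ∅ := by
      split_ifs with hi
      · subst hi; ext ω; simp [hstart ω]
      · ext ω
        simp only [Set.mem_setOf_eq, hstart ω, Set.mem_empty_iff_false, iff_false]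
        exact fun h => hi h.symm
    show P ({ω | Y 0 ω = i} ∩ G 0) = _
    rw [hG0, Set.inter_univ, hY0]
    split_ifs
    · simp
    · simp
  have hu0 : u 0 = (x : ℝ≥0∞) := by
    rw [hudef]
    simp only
    rw [tsum_eq_single x (fun b hb => by rw [ha0 b, if_neg hb, mul_zero])]
    rw [ha0 x, if_pos rfl, mul_one]
  have hfin : ∀ n, u n ≠ ⊤ := by
    intro n
    induction n with
    | zero => rw [hu0]; exact ENNReal.natCast_ne_top x
    | succ n ih =>
      have h1 : u (n + 1) ≤ d * a n 0 + u n := by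
        rw [← key n]; exact le_self_add
      have h2 : d * a n 0 + u n ≠ ⊤ := by
        refine ENNReal.add_ne_top.mpr ⟨ENNReal.mul_ne_top ?_ ?_, ih⟩
        · rw [hddef]; exact ENNReal.ofReal_ne_top
        · exact ((ha_le_one n 0).trans_lt ENNReal.one_lt_top).ne
      exact ne_top_of_le_ne_top h2 h1
  -- telescoping
  have tele : ∀ N, u N + c * (∑ n ∈ Finset.range N, r n)
      = u 0 + d * (∑ n ∈ Finset.range N, a n 0) := by
    intro N
    induction N with
    | zero => simp
    | succ N ih =>
      rw [Finset.sum_range_succ, Finset.sum_range_succ, mul_add, mul_add]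
      calc u (N + 1) + (c * ∑ n ∈ Finset.range N, r n + c * r N)
          = (u (N + 1) + c * r N) + c * ∑ n ∈ Finset.range N, r n := by ring
        _ = (d * a N 0 + u N) + c * ∑ n ∈ Finset.range N, r n := by rw [key N]
        _ = d * a N 0 + (u N + c * ∑ n ∈ Finset.range N, r n) := by ring
        _ = d * a N 0 + (u 0 + d * ∑ n ∈ Finset.range N, a n 0) := by rw [ih]
        _ = u 0 + (d * ∑ n ∈ Finset.range N, a n 0 + d * a N 0) := by ring
  have hcsum : c * (∑' n, r n) ≤ u 0 + d * (∑' n, a n 0) := by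
    rw [ENNReal.tsum_eq_iSup_nat, ENNReal.mul_iSup]
    refine iSup_le fun N => ?_
    calc c * ∑ n ∈ Finset.range N, r n ≤ u N + c * ∑ n ∈ Finset.range N, r n := le_add_self
      _ = u 0 + d * ∑ n ∈ Finset.range N, a n 0 := tele N
      _ ≤ u 0 + d * ∑' n, a n 0 := by
          gcongr
          exact ENNReal.sum_le_tsum _
  -- the values of a n 0
  have han0 : ∀ n, 1 ≤ n → a n 0 = 0 := by
    intro n hn
    have hemp : {ω : Ω | Y n ω = 0} ∩ G n = ∅ := by
      ext ω
      simp only [Set.mem_inter_iff, Set.mem_setOf_eq, hGdef, Set.mem_empty_iff_false, iff_false,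
        not_and]
      intro h0 hall
      exact hall n hn le_rfl h0
    show P ({ω | Y n ω = 0} ∩ G n) = 0
    rw [hemp, measure_empty]
  have hSz : (∑' n, a n 0) = (if x = 0 then 1 else 0) := by
    rw [tsum_eq_single 0 (fun b hb => han0 b (by omega)), ha0 0]
    simp [eq_comm]
  -- q n = a n 0 + r n
  have hq : ∀ n, q n = a n 0 + r n := by
    intro n
    have h1 : q n = ∑' i : ℕ, P (G n ∩ {ω | Y n ω = i}) := hpart n (G n) (hGmeas n)
    have h2 : ∀ i, P (G n ∩ {ω | Y n ω = i}) = a n i := by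
      intro i
      show _ = P ({ω | Y n ω = i} ∩ G n)
      rw [Set.inter_comm]
    calc q n = ∑' i : ℕ, P (G n ∩ {ω | Y n ω = i}) := h1
      _ = ∑' i : ℕ, a n i := tsum_congr h2
      _ = a n 0 + ∑' i : ℕ, a n (i + 1) :=
          tsum_eq_zero_add' (f := fun i : ℕ => a n i) ENNReal.summable
      _ = a n 0 + r n := rfl
  -- pointwise bound on the hitting time
  have hT : ∀ ω : Ω, (⨅ n ∈ {n : ℕ | 1 ≤ n ∧ Y n ω = 0}, (n : ℝ≥0∞))
      ≤ ∑' k : ℕ, (G k).indicator (fun _ => (1 : ℝ≥0∞)) ω := by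
    intro ω
    by_cases hex : ∃ n, 1 ≤ n ∧ Y n ω = 0
    · have hspec := Nat.find_spec hex
      have h1 : (⨅ n ∈ {n : ℕ | 1 ≤ n ∧ Y n ω = 0}, (n : ℝ≥0∞)) ≤ ((Nat.find hex : ℕ) : ℝ≥0∞) :=
        biInf_le _ hspec
      refine h1.trans ?_
      have h2 : ∀ k, k < Nat.find hex → ω ∈ G k := by
        intro k hk
        show ∀ m, 1 ≤ m → m ≤ k → Y m ω ≠ 0
        intro m hm1 hmk h0
        exact Nat.find_min hex (by omega) ⟨hm1, h0⟩
      calc ((Nat.find hex : ℕ) : ℝ≥0∞) = ∑ k ∈ Finset.range (Nat.find hex), 1 := by simp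
        _ = ∑ k ∈ Finset.range (Nat.find hex), (G k).indicator (fun _ => (1 : ℝ≥0∞)) ω := by
            refine Finset.sum_congr rfl fun k hk => ?_
            rw [Set.indicator_of_mem (h2 k (Finset.mem_range.mp hk))]
        _ ≤ ∑' k : ℕ, (G k).indicator (fun _ => (1 : ℝ≥0∞)) ω := ENNReal.sum_le_tsum _
    · push_neg at hex
      have h2 : ∀ k : ℕ, ω ∈ G k := by
        intro k
        show ∀ m, 1 ≤ m → m ≤ k → Y m ω ≠ 0
        intro m hm1 _
        exact hex m hm1
      have htop : ∑' k : ℕ, (G k).indicator (fun _ => (1 : ℝ≥0∞)) ω = ⊤ := by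
        have hone : ∀ k : ℕ, (G k).indicator (fun _ => (1 : ℝ≥0∞)) ω = 1 := fun k =>
          Set.indicator_of_mem (h2 k) _
        rw [tsum_congr hone]
        exact ENNReal.tsum_const_eq_top_of_ne_zero one_ne_zero
      rw [htop]
      exact le_top
  have hint : ∫⁻ ω, (⨅ n ∈ {n : ℕ | 1 ≤ n ∧ Y n ω = 0}, (n : ℝ≥0∞)) ∂P ≤ ∑' n, q n := by
    calc ∫⁻ ω, (⨅ n ∈ {n : ℕ | 1 ≤ n ∧ Y n ω = 0}, (n : ℝ≥0∞)) ∂P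
        ≤ ∫⁻ ω, ∑' k : ℕ, (G k).indicator (fun _ => (1 : ℝ≥0∞)) ω ∂P := lintegral_mono hT
      _ = ∑' k : ℕ, ∫⁻ ω, (G k).indicator (fun _ => (1 : ℝ≥0∞)) ω ∂P :=
          lintegral_tsum fun k => (measurable_const.indicator (hGmeas k)).aemeasurable
      _ = ∑' k : ℕ, P (G k) := by
          refine tsum_congr fun k => ?_
          exact lintegral_indicator_one (hGmeas k)
      _ = ∑' n, q n := rfl
  have hqsum : (∑' n, q n) = (if x = 0 then 1 else 0) + ∑' n, r n := by
    calc (∑' n, q n) = ∑' n, (a n 0 + r n) := tsum_congr hq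
      _ = (∑' n, a n 0) + ∑' n, r n := ENNReal.tsum_add
      _ = _ := by rw [hSz]
  have hc_ne : c ≠ 0 := by
    rw [hcdef]
    exact (ENNReal.ofReal_pos.mpr (by linarith)).ne'
  have hc_top : c ≠ ⊤ := by rw [hcdef]; exact ENNReal.ofReal_ne_top
  constructor
  · -- case 1 ≤ x
    intro hx
    have hx0 : ¬(x = 0) := by omega
    have hR : c * (∑' n, r n) ≤ (x : ℝ≥0∞) := by
      have h := hcsum
      rw [hu0, hSz, if_neg hx0, mul_zero, add_zero] at h
      exact h
    have hreal : (x : ℝ) ≤ (1 + 5 * (3 / 2 : ℝ) ^ x) * (1 - 4 * δ) := by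
      have hp : 1 + (x : ℝ) * (1 / 2) ≤ (3 / 2 : ℝ) ^ x := by
        have h := one_add_mul_le_pow (a := (1 / 2 : ℝ)) (by norm_num) x
        norm_num at h ⊢
        linarith
      nlinarith [(Nat.cast_nonneg x : (0 : ℝ) ≤ x),
        pow_nonneg (by norm_num : (0 : ℝ) ≤ 3 / 2) x]
    have hRb : (∑' n, r n) ≤ ENNReal.ofReal (1 + 5 * (3 / 2 : ℝ) ^ x) := by
      rw [← ENNReal.mul_le_mul_iff_left hc_ne hc_top]
      calc (∑' n, r n) * c = c * ∑' n, r n := mul_comm _ _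
        _ ≤ (x : ℝ≥0∞) := hR
        _ = ENNReal.ofReal (x : ℝ) := (ENNReal.ofReal_natCast x).symm
        _ ≤ ENNReal.ofReal ((1 + 5 * (3 / 2 : ℝ) ^ x) * (1 - 4 * δ)) :=
            ENNReal.ofReal_le_ofReal hreal
        _ = ENNReal.ofReal (1 + 5 * (3 / 2 : ℝ) ^ x) * c := by
            rw [hcdef, ← ENNReal.ofReal_mul (by positivity)]
    calc ∫⁻ ω, (⨅ n ∈ {n : ℕ | 1 ≤ n ∧ Y n ω = 0}, (n : ℝ≥0∞)) ∂P
        ≤ ∑' n, q n := hint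
      _ = (0 : ℝ≥0∞) + ∑' n, r n := by rw [hqsum, if_neg hx0]
      _ = ∑' n, r n := zero_add _
      _ ≤ _ := hRb
  · -- case x = 0
    intro hx
    subst hx
    have hR : c * (∑' n, r n) ≤ d := by
      have h := hcsum
      rw [hu0, hSz, if_pos rfl, mul_one] at h
      simpa using h
    have hRb : (∑' n, r n) ≤ ENNReal.ofReal (15 * δ) := by
      rw [← ENNReal.mul_le_mul_iff_left hc_ne hc_top]
      calc (∑' n, r n) * c = c * ∑' n, r n := mul_comm _ _
        _ ≤ d := hR
        _ = ENNReal.ofReal (2 * δ) := hddef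
        _ ≤ ENNReal.ofReal ((15 * δ) * (1 - 4 * δ)) := ENNReal.ofReal_le_ofReal (by nlinarith)
        _ = ENNReal.ofReal (15 * δ) * c := by
            rw [hcdef, ← ENNReal.ofReal_mul (by linarith)]
    calc ∫⁻ ω, (⨅ n ∈ {n : ℕ | 1 ≤ n ∧ Y n ω = 0}, (n : ℝ≥0∞)) ∂P
        ≤ ∑' n, q n := hint
      _ = (1 : ℝ≥0∞) + ∑' n, r n := by rw [hqsum, if_pos rfl]
      _ ≤ 1 + ENNReal.ofReal (15 * δ) := by gcongr
      _ = ENNReal.ofReal (1 + 15 * δ) := by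
          rw [ENNReal.ofReal_add (by norm_num) (by linarith), ENNReal.ofReal_one]

/-- For the Markov chain `(Y_n)` on `ℕ₀` with transition probabilities `pKer δ`, `δ ∈ (0,1/16)`,
the expected first hitting time `m_j` of `0` started from `j` satisfies
`m_j ≤ 1 + 5 (3/2)^j` for `j ≥ 1`, and `m_0 ≤ 1 + 15 δ`. -/
theorem stmt_6 {Ω : Type*} [MeasurableSpace Ω] (P : Measure Ω) [IsProbabilityMeasure P]
    (δ : ℝ) (hδ : δ ∈ Set.Ioo (0 : ℝ) (1 / 16))
    (Y : ℕ → Ω → ℕ) (hYmeas : ∀ n, Measurable (Y n))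
    (hMarkov : ∀ (n i j : ℕ) (B : (Fin (n + 1) → ℕ) → Prop),
      P ({ω | Y (n + 1) ω = j} ∩ {ω | Y n ω = i} ∩ {ω | B (fun k => Y k ω)})
        = ENNReal.ofReal (pKer δ i j) * P ({ω | Y n ω = i} ∩ {ω | B (fun k => Y k ω)}))
    (x : ℕ) (hstart : ∀ ω, Y 0 ω = x) :
    (1 ≤ x →
      ∫⁻ ω, (⨅ n ∈ {n : ℕ | 1 ≤ n ∧ Y n ω = 0}, (n : ℝ≥0∞)) ∂P
        ≤ ENNReal.ofReal (1 + 5 * (3 / 2 : ℝ) ^ x)) ∧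
    (x = 0 →
      ∫⁻ ω, (⨅ n ∈ {n : ℕ | 1 ≤ n ∧ Y n ω = 0}, (n : ℝ≥0∞)) ∂P
        ≤ ENNReal.ofReal (1 + 15 * δ)) :=
  stmt_6' P δ hδ Y hYmeas hMarkov x hstart
end

section
/- Let (ξ_s)_{s∈[0,t]} be a continuous path in ℝ^d with ξ_0 = y and ξ_t = 0, let e ∈ ℝ^d be a unit vector, and let R : (0,t) → [0,∞) be any function. Then there are at most two values of r ∈ ℝ such that R_s ≥ ‖ξ_s + (s/t) r e‖ for all s ∈ (0,t) and R_s = ‖ξ_s + (s/t) r e‖ for some s ∈ (0,t). -/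
/-- Key: a strictly convex quadratic in `r` can't be ≤ a bound at two points and equal to it
at a strictly intermediate point. -/
lemma stmt_7_key {d : ℕ} (v e : EuclideanSpace ℝ (Fin d)) (he : ‖e‖ = 1)
    (c p m q Rs : ℝ) (hc : 0 < c) (hpm : p < m) (hmq : m < q)
    (hp : ‖v + c • (p • e)‖ ≤ Rs) (hq : ‖v + c • (q • e)‖ ≤ Rs)
    (hm : ‖v + c • (m • e)‖ = Rs) : False := by
  set B : ℝ := inner ℝ v e with hB
  have expand : ∀ r : ℝ, ‖v + c • (r • e)‖ ^ 2 = ‖v‖ ^ 2 + 2 * (c * r) * B + (c * r) ^ 2 := by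
    intro r
    rw [smul_smul, @norm_add_sq_real, real_inner_smul_right, norm_smul, Real.norm_eq_abs, he]
    rw [hB]
    rw [mul_pow, sq_abs]
    ring
  have hRs : 0 ≤ Rs := hm ▸ norm_nonneg _
  have hp2 : ‖v + c • (p • e)‖ ^ 2 ≤ Rs ^ 2 := by
    have := norm_nonneg (v + c • (p • e)); nlinarith
  have hq2 : ‖v + c • (q • e)‖ ^ 2 ≤ Rs ^ 2 := by
    have := norm_nonneg (v + c • (q • e)); nlinarith
  have hm2 : ‖v + c • (m • e)‖ ^ 2 = Rs ^ 2 := by rw [hm]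
  rw [expand p] at hp2
  rw [expand q] at hq2
  rw [expand m] at hm2
  nlinarith [mul_pos (sub_pos.2 hpm) (sub_pos.2 hmq), mul_pos hc hc,
    mul_pos (mul_pos hc hc) (mul_pos (sub_pos.2 hpm) (sub_pos.2 hmq))]

/-- Let `ξ` be a continuous path in `ℝ^d` on `[0,t]` with `ξ 0 = y` and `ξ t = 0`, `e` a unit
vector, and `R : (0,t) → [0,∞)` any function. Then there are at most two values of `r ∈ ℝ`
such that `‖ξ s + (s/t) r e‖ ≤ R s` for all `s ∈ (0,t)` with equality for some `s ∈ (0,t)`. -/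
theorem stmt_7 {d : ℕ} (t : ℝ) (ht : 0 < t) (y : EuclideanSpace ℝ (Fin d))
    (ξ : ℝ → EuclideanSpace ℝ (Fin d))
    (hcont : ContinuousOn ξ (Set.Icc 0 t))
    (h0 : ξ 0 = y) (hT : ξ t = 0)
    (e : EuclideanSpace ℝ (Fin d)) (he : ‖e‖ = 1)
    (R : ℝ → ℝ) (hR : ∀ s ∈ Set.Ioo 0 t, 0 ≤ R s) :
    ∃ a b : ℝ,
      {r : ℝ | (∀ s ∈ Set.Ioo 0 t, ‖ξ s + (s / t) • (r • e)‖ ≤ R s) ∧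
        ∃ s ∈ Set.Ioo 0 t, ‖ξ s + (s / t) • (r • e)‖ = R s} ⊆ {a, b} := by
  set S : Set ℝ := {r : ℝ | (∀ s ∈ Set.Ioo 0 t, ‖ξ s + (s / t) • (r • e)‖ ≤ R s) ∧
        ∃ s ∈ Set.Ioo 0 t, ‖ξ s + (s / t) • (r • e)‖ = R s} with hSdef
  have sort : ∀ p m q : ℝ, p ∈ S → m ∈ S → q ∈ S → p < m → m < q → False := by
    intro p m q hpS hmS hqS hpm hmq
    obtain ⟨s, hs, heq⟩ := hmS.2
    exact stmt_7_key (ξ s) e he (s / t) p m q (R s) (div_pos hs.1 ht) hpm hmq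
      (hpS.1 s hs) (hqS.1 s hs) heq
  rcases Set.eq_empty_or_nonempty S with hS | ⟨a, ha⟩
  · exact ⟨0, 0, by rw [hS]; exact Set.empty_subset _⟩
  by_cases hb : ∃ b ∈ S, b ≠ a
  · obtain ⟨b, hbS, hba⟩ := hb
    refine ⟨a, b, fun r hr => ?_⟩
    by_contra hcon
    have hra : r ≠ a := by rintro rfl; exact hcon (Or.inl rfl)
    have hrb : r ≠ b := by rintro rfl; exact hcon (Or.inr rfl)
    -- a, b, r distinct, all in S
    rcases lt_trichotomy a b with h1 | h1 | h1
    · rcases lt_trichotomy r a with h2 | h2 | h2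
      · exact sort r a b hr ha hbS h2 h1
      · exact hra h2
      · rcases lt_trichotomy r b with h3 | h3 | h3
        · exact sort a r b ha hr hbS h2 h3
        · exact hrb h3
        · exact sort a b r ha hbS hr h1 h3
    · exact hba h1.symm
    · rcases lt_trichotomy r b with h2 | h2 | h2
      · exact sort r b a hr hbS ha h2 h1
      · exact hrb h2
      · rcases lt_trichotomy r a with h3 | h3 | h3
        · exact sort b r a hbS hr ha h2 h3
        · exact hra h3
        · exact sort b a r hbS ha hr h1 h3
  · push_neg at hb
    exact ⟨a, a, fun r hr => Or.inl (hb r hr)⟩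
end

section
/- Let F, G : [0,∞) → ℝ be non-decreasing functions with F continuous, F(0) = 0 and lim_{r→∞} F(r) ≥ 1 - M^{-1}, where M ∈ ℕ, M ≥ 3, and G arbitrary with values in [0,1]. Define r_k = inf{y ≥ 0 : F(y) ≥ k/M} for 0 ≤ k ≤ M. Suppose |G(r_k) - F(r_k)| ≤ η for all 1 ≤ k ≤ M - 2 (with η ≥ 0) and that (M-2)/M + η ≤ 1. Then sup_{r≥0} |min(G(r),1) - min(F(r),1)| ≤ η + 1/M + 2/M. -/
/-- Deterministic interpolation: if `F` is continuous non-decreasing on `[0,∞)` with `F 0 = 0`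
and limit at infinity at least `1 - 1/M` (`M ≥ 3`), `G : [0,∞) → [0,1]` is non-decreasing, and
`|G(r_k) - F(r_k)| ≤ η` at the quantile points `r_k = inf {y ≥ 0 : F y ≥ k/M}` for
`1 ≤ k ≤ M - 2` (with `(M-2)/M + η ≤ 1`), then
`sup_{r ≥ 0} |min(G r, 1) - min(F r, 1)| ≤ η + 1/M + 2/M`. -/
theorem stmt_11 (M : ℕ) (hM : 3 ≤ M) (η : ℝ) (hη : 0 ≤ η)
    (F G : ℝ → ℝ)
    (hFmono : MonotoneOn F (Set.Ici 0)) (hGmono : MonotoneOn G (Set.Ici 0))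
    (hFcont : ContinuousOn F (Set.Ici 0)) (hF0 : F 0 = 0)
    (hFlim : ∃ L : ℝ, Filter.Tendsto F Filter.atTop (nhds L) ∧ 1 - (M : ℝ)⁻¹ ≤ L)
    (hG01 : ∀ r, 0 ≤ r → G r ∈ Set.Icc (0 : ℝ) 1)
    (hclose : ∀ k : ℕ, 1 ≤ k → k ≤ M - 2 →
      |G (sInf {y : ℝ | 0 ≤ y ∧ (k : ℝ) / M ≤ F y})
        - F (sInf {y : ℝ | 0 ≤ y ∧ (k : ℝ) / M ≤ F y})| ≤ η)
    (hcond : ((M : ℝ) - 2) / M + η ≤ 1) :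
    ∀ r, 0 ≤ r → |min (G r) 1 - min (F r) 1| ≤ η + 1 / M + 2 / M := by
  classical
  obtain ⟨L, hL, hL1⟩ := hFlim
  have hMR : (3:ℝ) ≤ M := by exact_mod_cast hM
  have hMpos : (0:ℝ) < M := by linarith
  have hM2cast : ((M - 2 : ℕ) : ℝ) = (M:ℝ) - 2 := by
    have h2 : (2:ℕ) ≤ M := by omega
    push_cast [h2]
    ring
  set S : ℕ → Set ℝ := fun k => {y : ℝ | 0 ≤ y ∧ (k : ℝ)/M ≤ F y} with hSdef
  set rr : ℕ → ℝ := fun k => sInf (S k) with hrrdef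
  have hclose' : ∀ k : ℕ, 1 ≤ k → k ≤ M - 2 → |G (rr k) - F (rr k)| ≤ η := hclose
  have hbdd : ∀ k, BddBelow (S k) := fun k => ⟨0, fun y hy => hy.1⟩
  have hclosed : ∀ k, IsClosed (S k) := by
    intro k
    have h1 : S k = Set.Ici (0:ℝ) ∩ F ⁻¹' Set.Ici ((k:ℝ)/M) := by
      ext y
      simp [hSdef]
    rw [h1]
    exact hFcont.preimage_isClosed_of_isClosed isClosed_Ici isClosed_Ici
  have hne : ∀ k, k ≤ M - 2 → (S k).Nonempty := by
    intro k hk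
    have hinv : (0:ℝ) < (M:ℝ)⁻¹ := by positivity
    have hk' : (k:ℝ) ≤ (M:ℝ) - 2 := by
      have := (Nat.cast_le (α := ℝ)).2 hk
      rwa [hM2cast] at this
    have e1 : (k:ℝ)/M ≤ ((M:ℝ)-2)/M := by gcongr
    have e2 : ((M:ℝ)-2)/M = 1 - 2 * (M:ℝ)⁻¹ := by
      field_simp
    have hkM : (k:ℝ)/M < L := by linarith
    have hev : ∀ᶠ y in Filter.atTop, (k:ℝ)/M < F y := hL.eventually (eventually_gt_nhds hkM)
    obtain ⟨y, hy1, hy2⟩ := (hev.and (Filter.eventually_ge_atTop (0:ℝ))).exists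
    exact ⟨y, hy2, le_of_lt hy1⟩
  have hmem : ∀ k, k ≤ M - 2 → rr k ∈ S k := fun k hk =>
    (hclosed k).csInf_mem (hne k hk) (hbdd k)
  have hrpos : ∀ k, k ≤ M - 2 → 0 ≤ rr k := fun k hk => (hmem k hk).1
  have hFge : ∀ k, k ≤ M - 2 → (k:ℝ)/M ≤ F (rr k) := fun k hk => (hmem k hk).2
  have hFle : ∀ k, k ≤ M - 2 → F (rr k) ≤ (k:ℝ)/M := by
    intro k hk
    by_contra hcon
    push_neg at hcon
    rcases eq_or_lt_of_le (hrpos k hk) with h0 | hpos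
    · have hk0 : (0:ℝ) ≤ (k:ℝ)/M := by positivity
      rw [← h0, hF0] at hcon
      linarith
    · have hca : ContinuousAt F (rr k) :=
        hFcont.continuousAt (Ici_mem_nhds hpos)
      have hev1 : ∀ᶠ y in nhds (rr k), (k:ℝ)/M < F y := hca.eventually (eventually_gt_nhds hcon)
      have hev2 : ∀ᶠ y in nhds (rr k), 0 < y := eventually_gt_nhds hpos
      have hev : ∀ᶠ y in nhdsWithin (rr k) (Set.Iio (rr k)), y ∈ S k := by
        filter_upwards [(hev1.and hev2).filter_mono nhdsWithin_le_nhds] with y hy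
        exact ⟨le_of_lt hy.2, le_of_lt hy.1⟩
      obtain ⟨y, hyS, hylt⟩ := (hev.and self_mem_nhdsWithin).exists
      have hle : rr k ≤ y := csInf_le (hbdd k) hyS
      exact absurd hle (not_le.mpr hylt)
  have hFeq : ∀ k, k ≤ M - 2 → F (rr k) = (k:ℝ)/M := fun k hk =>
    le_antisymm (hFle k hk) (hFge k hk)
  intro r hr
  have hGr := hG01 r hr
  have hminG : min (G r) 1 = G r := min_eq_left hGr.2
  rw [hminG]
  have h1M : (0:ℝ) < 1/M := by positivity
  have h2M : (0:ℝ) < 2/M := by positivity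
  have hM2le : 1 ≤ M - 2 := by omega
  have hc2 : ((M-2:ℕ):ℝ)/M = 1 - 2/M := by
    rw [hM2cast]; field_simp
  by_cases hcase : rr (M-2) ≤ r
  · -- region to the right of the last quantile point
    have hFval : F (rr (M-2)) = 1 - 2/M := by rw [hFeq _ le_rfl, hc2]
    have hFr : 1 - 2/M ≤ F r := by
      have := hFmono (hrpos _ le_rfl) hr hcase
      linarith
    have hGclose := (abs_le.1 (hclose' (M-2) hM2le le_rfl)).1
    have hG2 : 1 - 2/M - η ≤ G (rr (M-2)) := by linarith
    have hGrlow : 1 - 2/M - η ≤ G r :=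
      le_trans hG2 (hGmono (hrpos _ le_rfl) hr hcase)
    have hcond2 : (1:ℝ) - 2/M ≤ 1 := by linarith
    have hminF1 : min (F r) 1 ≤ 1 := min_le_right _ _
    have hminF2 : 1 - 2/M ≤ min (F r) 1 := le_min hFr hcond2
    rw [abs_le]
    constructor <;> linarith [hGr.2]
  · push_neg at hcase
    have h0 : rr 0 ≤ r := by
      have h00 : (0:ℝ) ∈ S 0 := by
        constructor
        · exact le_refl 0
        · rw [hF0]; norm_num
      exact le_trans (csInf_le (hbdd 0) h00) hr
    set k := Nat.findGreatest (fun j => rr j ≤ r) (M-2) with hkdef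
    have hkle : k ≤ M - 2 := Nat.findGreatest_le _
    have hkspec : rr k ≤ r := Nat.findGreatest_spec (P := fun j => rr j ≤ r) (Nat.zero_le _) h0
    have hkne : k ≠ M - 2 := by
      intro h
      rw [h] at hkspec
      exact absurd hkspec (not_le.mpr hcase)
    have hk1le : k + 1 ≤ M - 2 := by omega
    have hnot : ¬ rr (k+1) ≤ r :=
      Nat.findGreatest_is_greatest (Nat.lt_succ_self k) hk1le
    push_neg at hnot
    have hcast1 : ((k+1:ℕ):ℝ) = (k:ℝ) + 1 := by push_cast; ring
    have hFrlow : (k:ℝ)/M ≤ F r := by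
      have := hFmono (hrpos k hkle) hr hkspec
      rw [hFeq k hkle] at this
      linarith
    have hFrhigh : F r ≤ ((k:ℝ)+1)/M := by
      have := hFmono hr (hrpos (k+1) hk1le) (le_of_lt hnot)
      rw [hFeq (k+1) hk1le, hcast1] at this
      exact this
    have hGhigh : G r ≤ ((k:ℝ)+1)/M + η := by
      have h1 := hGmono hr (hrpos (k+1) hk1le) (le_of_lt hnot)
      have h2 := (abs_le.1 (hclose' (k+1) (by omega) hk1le)).2
      rw [hFeq (k+1) hk1le, hcast1] at h2
      linarith
    have hGlow : (k:ℝ)/M - η ≤ G r := by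
      rcases Nat.eq_zero_or_pos k with hk0 | hkpos
      · have : (0:ℝ) ≤ G r := hGr.1
        rw [hk0]
        push_cast
        rw [zero_div]
        linarith
      · have h1 := hGmono (hrpos k hkle) hr hkspec
        have h2 := (abs_le.1 (hclose' k hkpos hkle)).1
        rw [hFeq k hkle] at h2
        linarith
    have hkM : ((k:ℝ)+1) ≤ (M:ℝ) - 2 := by
      have := (Nat.cast_le (α := ℝ)).2 hk1le
      rw [hM2cast] at this
      push_cast at this
      linarith
    have hfrac : ((k:ℝ)+1)/M ≤ ((M:ℝ)-2)/M := by gcongr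
    have hfrac2 : ((M:ℝ)-2)/M = 1 - 2/M := by field_simp
    have hFr1 : F r ≤ 1 := by linarith
    have hdiv : ((k:ℝ)+1)/M = (k:ℝ)/M + 1/M := by ring
    rw [min_eq_left hFr1, abs_le]
    constructor <;> linarith
end

section
/- Let μ be a probability measure on ℝ^d and Φ_ε the heat kernel at time ε ∈ (0,1). Then for every r ≥ 0, ∫_{B(r)} (Φ_ε * μ)(y) dy ≤ μ(B(r + ε^{1/3})) + 2d e^{-ε^{-1/3}/(4d)}, where B(r) is the open ball of radius r centred at the origin. -/
open MeasureTheory Real Set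


-- 1-d Gaussian normalization
lemma aux_gauss_int {ε : ℝ} (hε : 0 < ε) :
    ∫ t : ℝ, Real.exp (-t ^ 2 / (4 * ε)) = Real.sqrt (4 * Real.pi * ε) := by
  have h : ∀ t : ℝ, -t ^ 2 / (4 * ε) = -((4 * ε)⁻¹) * t ^ 2 := by
    intro t; field_simp
  simp_rw [h]
  rw [integral_gaussian]
  congr 1
  field_simp

lemma aux_gauss_integrable {ε : ℝ} (hε : 0 < ε) :
    Integrable (fun t : ℝ => Real.exp (-t ^ 2 / (4 * ε))) := by
  have h : ∀ t : ℝ, -t ^ 2 / (4 * ε) = -((4 * ε)⁻¹) * t ^ 2 := by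
    intro t; field_simp
  simp_rw [h]
  exact integrable_exp_neg_mul_sq (by positivity)

-- exponential tail
lemma aux_exp_tail {c : ℝ} (hc : 0 < c) (a : ℝ) :
    ∫ t in Set.Ioi a, Real.exp (-(c * t)) = Real.exp (-(c * a)) / c := by
  have H : ∀ x ∈ Set.Ici a, HasDerivAt (fun t => -Real.exp (-(c * t)) / c)
      (Real.exp (-(c * x))) x := by
    intro x _
    have h1 : HasDerivAt (fun t : ℝ => -(c * t)) (-c) x := by
      simpa using ((hasDerivAt_id x).const_mul c).fun_neg
    have h2 := h1.exp
    have h3 := (h2.fun_neg).div_const c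
    refine h3.congr_deriv ?_
    field_simp
  have htend : Filter.Tendsto (fun t => -Real.exp (-(c * t)) / c) Filter.atTop (nhds 0) := by
    have h0 : Filter.Tendsto (fun t : ℝ => c * t) Filter.atTop Filter.atTop :=
      Filter.Tendsto.const_mul_atTop hc Filter.tendsto_id
    have := (Real.tendsto_exp_neg_atTop_nhds_zero.comp h0).neg.div_const c
    simpa using this
  have hint : IntegrableOn (fun t => Real.exp (-(c * t))) (Set.Ioi a) := by
    simpa [neg_mul] using exp_neg_integrableOn_Ioi a hc
  have := integral_Ioi_of_hasDerivAt_of_tendsto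
    (((H a (Set.self_mem_Ici)).continuousAt).continuousWithinAt)
    (fun x hx => H x (Set.mem_Ici.2 (le_of_lt hx))) hint htend
  rw [this]
  field_simp
  ring

lemma aux_tail_Ioi {ε a : ℝ} (hε : 0 < ε) (ha : 0 < a) :
    ∫ t in Set.Ioi a, Real.exp (-t ^ 2 / (4 * ε)) ≤ (4 * ε / a) * Real.exp (-a ^ 2 / (4 * ε)) := by
  have hc : 0 < a / (4 * ε) := by positivity
  have hstep : ∫ t in Set.Ioi a, Real.exp (-t ^ 2 / (4 * ε))
      ≤ ∫ t in Set.Ioi a, Real.exp (-(a / (4 * ε) * t)) := by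
    apply setIntegral_mono_on
    · exact (aux_gauss_integrable hε).integrableOn
    · simpa [neg_mul] using (exp_neg_integrableOn_Ioi a hc)
    · exact measurableSet_Ioi
    · intro t ht
      apply Real.exp_le_exp.2
      rw [neg_div, neg_le_neg_iff, div_mul_eq_mul_div]
      gcongr
      nlinarith [Set.mem_Ioi.mp ht]
  rw [aux_exp_tail hc a] at hstep
  have heq : Real.exp (-(a / (4 * ε) * a)) / (a / (4 * ε))
      = (4 * ε / a) * Real.exp (-a ^ 2 / (4 * ε)) := by
    rw [show -(a / (4 * ε) * a) = -a ^ 2 / (4 * ε) by ring, div_eq_mul_inv, inv_div, mul_comm]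
  rwa [heq] at hstep

-- two-sided Gaussian tail
lemma aux_tail_abs {ε a : ℝ} (hε : 0 < ε) (ha : 0 < a) :
    ∫ t in {t : ℝ | a ≤ |t|}, Real.exp (-t ^ 2 / (4 * ε))
      ≤ 2 * (4 * ε / a) * Real.exp (-a ^ 2 / (4 * ε)) := by
  have hset : {t : ℝ | a ≤ |t|} = Set.Iic (-a) ∪ Set.Ici a := by
    ext t; simp [le_abs, le_neg]; tauto
  have hint := aux_gauss_integrable hε
  have hdisj : Disjoint (Set.Iic (-a)) (Set.Ici a) := Set.Iic_disjoint_Ici.mpr (by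
    intro h; linarith)
  rw [hset, setIntegral_union hdisj measurableSet_Ici hint.integrableOn hint.integrableOn]
  have heven : ∫ t in Set.Iic (-a), Real.exp (-t ^ 2 / (4 * ε))
      = ∫ t in Set.Ioi a, Real.exp (-t ^ 2 / (4 * ε)) := by
    have := integral_comp_neg_Iic (-a) (fun s : ℝ => Real.exp (-s ^ 2 / (4 * ε)))
    rw [neg_neg] at this
    rw [← this]
    simp only [neg_sq]
  have hIci : ∫ t in Set.Ici a, Real.exp (-t ^ 2 / (4 * ε))
      = ∫ t in Set.Ioi a, Real.exp (-t ^ 2 / (4 * ε)) := integral_Ici_eq_integral_Ioi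
  rw [heven, hIci]
  have := aux_tail_Ioi hε ha
  linarith

section Dim
variable {d : ℕ} {ε : ℝ}

-- abbreviations
noncomputable def phi (ε : ℝ) (t : ℝ) : ℝ :=
  (4 * Real.pi * ε) ^ (-(1:ℝ)/2) * Real.exp (-t ^ 2 / (4 * ε))

lemma phi_nonneg (hε : 0 < ε) (t : ℝ) : 0 ≤ phi ε t := by
  unfold phi; positivity

lemma phi_integrable (hε : 0 < ε) : Integrable (phi ε) :=
  (aux_gauss_integrable hε).const_mul _

lemma phi_int_one (hε : 0 < ε) : ∫ t : ℝ, phi ε t = 1 := by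
  unfold phi
  rw [integral_const_mul, aux_gauss_int hε]
  have h1 : (0:ℝ) < 4 * Real.pi * ε := by positivity
  rw [show (-1/2 : ℝ) = -(1/2) by norm_num, Real.rpow_neg h1.le, Real.sqrt_eq_rpow]
  norm_num
  rw [inv_mul_cancel₀]
  positivity

-- product formula
lemma heat_prod (hε : 0 < ε) (z : EuclideanSpace ℝ (Fin d)) :
    (4 * Real.pi * ε) ^ (-(d : ℝ) / 2) * Real.exp (-‖z‖ ^ 2 / (4 * ε))
      = ∏ i, phi ε (z i) := by
  have h1 : (0:ℝ) < 4 * Real.pi * ε := by positivity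
  have hnorm : ‖z‖ ^ 2 = ∑ i, (z i) ^ 2 := by
    rw [EuclideanSpace.norm_eq, Real.sq_sqrt]
    · simp [Real.norm_eq_abs, sq_abs]
    · positivity
  have hC : (4 * Real.pi * ε) ^ (-(d : ℝ) / 2)
      = ((4 * Real.pi * ε) ^ (-(1:ℝ)/2)) ^ d := by
    rw [show (-(d : ℝ) / 2) = (-(1:ℝ)/2) * (d : ℕ) by push_cast; ring,
      Real.rpow_mul h1.le, Real.rpow_natCast]
  have hexp : Real.exp (-‖z‖ ^ 2 / (4 * ε)) = ∏ i, Real.exp (-(z i) ^ 2 / (4 * ε)) := by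
    rw [hnorm, ← Real.exp_sum]
    congr 1
    rw [← Finset.sum_neg_distrib, Finset.sum_div]
  rw [hC, hexp]
  unfold phi
  rw [Finset.prod_mul_distrib, Finset.prod_const, Finset.card_univ, Fintype.card_fin]

-- the Gaussian product on EuclideanSpace
noncomputable def Phi (d : ℕ) (ε : ℝ) (z : EuclideanSpace ℝ (Fin d)) : ℝ := ∏ i, phi ε (z i)

lemma Phi_nonneg (hε : 0 < ε) (z : EuclideanSpace ℝ (Fin d)) : 0 ≤ Phi d ε z :=
  Finset.prod_nonneg fun i _ => phi_nonneg hε _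

lemma measurable_coord (i : Fin d) :
    Measurable (fun z : EuclideanSpace ℝ (Fin d) => z i) :=
  (measurable_pi_apply i).comp (MeasurableEquiv.toLp 2 (Fin d → ℝ)).symm.measurable

lemma Phi_measurable (hε : 0 < ε) : Measurable (Phi d ε) := by
  apply Finset.measurable_prod
  intro i _
  unfold phi
  exact (((measurable_coord i).pow_const 2).neg.div_const _).exp.const_mul _

lemma Phi_integrable (hε : 0 < ε) : Integrable (Phi d ε) := by
  have h := (Integrable.fintype_prod (𝕜 := ℝ) (ι := Fin d) (f := fun _ => phi ε)
    (fun _ => phi_integrable hε))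
  have hmp := (EuclideanSpace.volume_preserving_symm_measurableEquiv_toLp (Fin d)).symm
  rw [← hmp.integrable_comp_emb (MeasurableEquiv.measurableEmbedding _)]
  exact h

lemma Phi_int_one (hε : 0 < ε) : ∫ z, Phi d ε z = 1 := by
  have hmp := (EuclideanSpace.volume_preserving_symm_measurableEquiv_toLp (Fin d)).symm
  rw [← hmp.integral_comp (MeasurableEquiv.measurableEmbedding _)]
  have : ∀ w : Fin d → ℝ,
      Phi d ε ((MeasurableEquiv.toLp 2 (Fin d → ℝ)).symm.symm w) = ∏ i, phi ε (w i) := by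
    intro w; rfl
  simp_rw [this]
  rw [MeasureTheory.integral_fintype_prod_volume_eq_prod (fun _ => phi ε)]
  simp [phi_int_one hε]

end Dim

variable {d : ℕ} {ε : ℝ}
lemma measurableSet_cyl (a : ℝ) (i : Fin d) :
    MeasurableSet {z : EuclideanSpace ℝ (Fin d) | a ≤ |z i|} :=
  measurableSet_le measurable_const (measurable_coord i).abs

-- cylinder integral
lemma cyl_integral (hε : 0 < ε) (a : ℝ) (i₀ : Fin d) :
    ∫ z in {z : EuclideanSpace ℝ (Fin d) | a ≤ |z i₀|}, Phi d ε z
      = ∫ t in {t : ℝ | a ≤ |t|}, phi ε t := by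
  classical
  have hmp := (EuclideanSpace.volume_preserving_symm_measurableEquiv_toLp (Fin d)).symm
  rw [← hmp.setIntegral_preimage_emb (MeasurableEquiv.measurableEmbedding _)]
  have hpre : (MeasurableEquiv.toLp 2 (Fin d → ℝ)).symm.symm ⁻¹'
      {z : EuclideanSpace ℝ (Fin d) | a ≤ |z i₀|} = {w : Fin d → ℝ | a ≤ |w i₀|} := rfl
  rw [hpre]
  set ψ : Fin d → ℝ → ℝ := fun i => if i = i₀ then Set.indicator {t : ℝ | a ≤ |t|} (phi ε) else phi ε
    with hψ
  have hψi : ψ i₀ = Set.indicator {t : ℝ | a ≤ |t|} (phi ε) := by simp [hψ]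
  have hψne : ∀ i, i ≠ i₀ → ψ i = phi ε := fun i hi => by simp [hψ, hi]
  have hPmeas : MeasurableSet {w : Fin d → ℝ | a ≤ |w i₀|} :=
    measurableSet_le measurable_const (measurable_pi_apply i₀).abs
  have hAmeas : MeasurableSet {t : ℝ | a ≤ |t|} :=
    measurableSet_le measurable_const measurable_abs
  have key : ∀ w : Fin d → ℝ,
      Set.indicator {w : Fin d → ℝ | a ≤ |w i₀|}
        (fun w => Phi d ε ((MeasurableEquiv.toLp 2 (Fin d → ℝ)).symm.symm w)) w
      = ∏ i, ψ i (w i) := by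
    intro w
    by_cases hw : w ∈ {w : Fin d → ℝ | a ≤ |w i₀|}
    · rw [Set.indicator_of_mem hw]
      have : Phi d ε ((MeasurableEquiv.toLp 2 (Fin d → ℝ)).symm.symm w) = ∏ i, phi ε (w i) := rfl
      rw [this]
      apply Finset.prod_congr rfl
      intro i _
      by_cases hi : i = i₀
      · rw [hi, hψi]
        exact (Set.indicator_of_mem (s := {t : ℝ | a ≤ |t|}) (a := w i₀)
          (show a ≤ |w i₀| from hw) (phi ε)).symm
      · rw [hψne i hi]
    · rw [Set.indicator_of_notMem hw]
      symm
      apply Finset.prod_eq_zero (Finset.mem_univ i₀)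
      rw [hψi]
      exact Set.indicator_of_notMem (s := {t : ℝ | a ≤ |t|}) (a := w i₀)
        (show ¬ a ≤ |w i₀| from hw) (phi ε)
  rw [← integral_indicator hPmeas]
  simp_rw [key]
  rw [MeasureTheory.integral_fintype_prod_volume_eq_prod ψ]
  rw [Finset.prod_eq_single i₀]
  · rw [hψi]
    exact integral_indicator hAmeas
  · intro i _ hi
    rw [hψne i hi]
    exact phi_int_one hε
  · intro h; exact absurd (Finset.mem_univ i₀) h

-- tail bound in E
lemma tail_E (hε : 0 < ε) {a δ : ℝ} (ha : 0 < a) (hδ0 : 0 ≤ δ) (hδ : δ ^ 2 = d * a ^ 2) (hd : 0 < d) :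
    ∫ z in {z : EuclideanSpace ℝ (Fin d) | δ ≤ ‖z‖}, Phi d ε z
      ≤ d * ∫ t in {t : ℝ | a ≤ |t|}, phi ε t := by
  classical
  have hSmeas : MeasurableSet {z : EuclideanSpace ℝ (Fin d) | δ ≤ ‖z‖} :=
    measurableSet_le measurable_const measurable_norm
  have hsub : ∀ z : EuclideanSpace ℝ (Fin d), δ ≤ ‖z‖ → ∃ i, a ≤ |z i| := by
    intro z hz
    by_contra hcon
    push_neg at hcon
    have hlt : ∀ i, |z i| < a := hcon
    have hsum : ∑ i, (z i) ^ 2 < d * a ^ 2 := by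
      calc ∑ i : Fin d, (z i) ^ 2 < ∑ _i : Fin d, a ^ 2 := by
            apply Finset.sum_lt_sum_of_nonempty
            · exact Finset.univ_nonempty_iff.mpr (by exact Fin.pos_iff_nonempty.mp hd)
            · intro i _
              have := hlt i
              nlinarith [abs_nonneg (z i), sq_abs (z i), this]
        _ = d * a ^ 2 := by rw [Finset.sum_const, Finset.card_univ, Fintype.card_fin]; ring
    have hnorm : ‖z‖ ^ 2 = ∑ i, (z i) ^ 2 := by
      rw [EuclideanSpace.norm_eq, Real.sq_sqrt]
      · simp [Real.norm_eq_abs, sq_abs]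
      · positivity
    have : ‖z‖ ^ 2 < δ ^ 2 := by rw [hnorm, hδ]; exact hsum
    nlinarith [norm_nonneg z, hz, hδ0]
  -- indicator comparison
  have hptwise : ∀ z, Set.indicator {z : EuclideanSpace ℝ (Fin d) | δ ≤ ‖z‖} (Phi d ε) z
      ≤ ∑ i, Set.indicator {z : EuclideanSpace ℝ (Fin d) | a ≤ |z i|} (Phi d ε) z := by
    intro z
    by_cases hz : z ∈ {z : EuclideanSpace ℝ (Fin d) | δ ≤ ‖z‖}
    · rw [Set.indicator_of_mem hz]
      obtain ⟨i, hi⟩ := hsub z hz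
      calc Phi d ε z = Set.indicator {z : EuclideanSpace ℝ (Fin d) | a ≤ |z i|} (Phi d ε) z :=
            (Set.indicator_of_mem (show z ∈ {z : EuclideanSpace ℝ (Fin d) | a ≤ |z i|} from hi)
              (Phi d ε)).symm
        _ ≤ ∑ j, Set.indicator {z : EuclideanSpace ℝ (Fin d) | a ≤ |z j|} (Phi d ε) z := by
            apply Finset.single_le_sum (f := fun j =>
              Set.indicator {z : EuclideanSpace ℝ (Fin d) | a ≤ |z j|} (Phi d ε) z)
              (fun j _ => Set.indicator_nonneg (fun y _ => Phi_nonneg hε y) _)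
              (Finset.mem_univ i)
    · rw [Set.indicator_of_notMem hz]
      exact Finset.sum_nonneg fun j _ =>
        Set.indicator_nonneg (fun y _ => Phi_nonneg hε y) _
  have hint1 : Integrable (Set.indicator {z : EuclideanSpace ℝ (Fin d) | δ ≤ ‖z‖} (Phi d ε)) :=
    (Phi_integrable hε).indicator hSmeas
  have hint2 : ∀ i : Fin d, Integrable
      (Set.indicator {z : EuclideanSpace ℝ (Fin d) | a ≤ |z i|} (Phi d ε)) := fun i =>
    (Phi_integrable hε).indicator (measurableSet_cyl a i)
  calc ∫ z in {z : EuclideanSpace ℝ (Fin d) | δ ≤ ‖z‖}, Phi d ε z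
      = ∫ z, Set.indicator {z : EuclideanSpace ℝ (Fin d) | δ ≤ ‖z‖} (Phi d ε) z :=
        (integral_indicator hSmeas).symm
    _ ≤ ∫ z, ∑ i, Set.indicator {z : EuclideanSpace ℝ (Fin d) | a ≤ |z i|} (Phi d ε) z :=
        integral_mono hint1 (integrable_finset_sum _ fun i _ => hint2 i) hptwise
    _ = ∑ i : Fin d, ∫ z, Set.indicator {z : EuclideanSpace ℝ (Fin d) | a ≤ |z i|} (Phi d ε) z :=
        integral_finset_sum _ fun i _ => hint2 i
    _ = ∑ _i : Fin d, ∫ t in {t : ℝ | a ≤ |t|}, phi ε t := by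
        apply Finset.sum_congr rfl
        intro i _
        rw [integral_indicator (measurableSet_cyl a i), cyl_integral hε a i]
    _ = d * ∫ t in {t : ℝ | a ≤ |t|}, phi ε t := by
        rw [Finset.sum_const, Finset.card_univ, Fintype.card_fin]; ring

set_option maxHeartbeats 1000000 in
/-- For a probability measure `μ` on `ℝ^d`, the heat kernel `Φ_ε` at time `ε ∈ (0,1)`, and any
`r ≥ 0`, `∫_{B(r)} (Φ_ε * μ)(y) dy ≤ μ(B(r + ε^{1/3})) + 2 d e^{-ε^{-1/3}/(4d)}`. -/
theorem stmt_16 (d : ℕ) (hd : 0 < d) (ε : ℝ) (hε : ε ∈ Set.Ioo (0 : ℝ) 1)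
    (μ : Measure (EuclideanSpace ℝ (Fin d))) [IsProbabilityMeasure μ]
    (r : ℝ) (hr : 0 ≤ r) :
    (∫ y in Metric.ball (0 : EuclideanSpace ℝ (Fin d)) r,
        ∫ x, (4 * Real.pi * ε) ^ (-(d : ℝ) / 2) * Real.exp (-‖y - x‖ ^ 2 / (4 * ε)) ∂μ)
      ≤ (μ (Metric.ball (0 : EuclideanSpace ℝ (Fin d)) (r + ε ^ ((1 : ℝ) / 3)))).toReal
        + 2 * d * Real.exp (-(ε ^ (-(1 : ℝ) / 3)) / (4 * d)) := by
  classical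
  obtain ⟨hε0, hε1⟩ := hε
  set E := EuclideanSpace ℝ (Fin d)
  set δ : ℝ := ε ^ ((1 : ℝ) / 3) with hδdef
  have hδpos : 0 < δ := Real.rpow_pos_of_pos hε0 _
  have hδ3 : δ ^ 3 = ε := by
    rw [hδdef, ← Real.rpow_natCast (ε ^ ((1:ℝ)/3)) 3, ← Real.rpow_mul hε0.le]
    norm_num
  have hεinv : ε ^ (-(1 : ℝ) / 3) = δ⁻¹ := by
    rw [show (-(1:ℝ)/3) = -((1:ℝ)/3) by norm_num, Real.rpow_neg hε0.le, hδdef]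
  -- rewrite the heat kernel as Phi
  have hrw : ∀ y x : E, (4 * Real.pi * ε) ^ (-(d : ℝ) / 2)
      * Real.exp (-‖y - x‖ ^ 2 / (4 * ε)) = Phi d ε (y - x) :=
    fun y x => heat_prod hε0 (y - x)
  simp_rw [hrw]
  -- continuity and boundedness of the kernel
  set C : ℝ := (4 * Real.pi * ε) ^ (-(d : ℝ) / 2) with hC
  have hPhiEq : Phi d ε = fun z : E => C * Real.exp (-‖z‖ ^ 2 / (4 * ε)) :=
    funext fun z => (heat_prod hε0 z).symm
  have hHcont : Continuous (fun z : E => C * Real.exp (-‖z‖ ^ 2 / (4 * ε))) := by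
    fun_prop
  have hPhicont : Continuous (Phi d ε) := by rw [hPhiEq]; exact hHcont
  have hPhile : ∀ z : E, Phi d ε z ≤ C := by
    intro z
    rw [hPhiEq]
    have h1 : Real.exp (-‖z‖ ^ 2 / (4 * ε)) ≤ 1 := by
      rw [Real.exp_le_one_iff, neg_div]
      have : (0:ℝ) ≤ ‖z‖ ^ 2 / (4 * ε) := by positivity
      linarith
    have hC0 : 0 ≤ C := by rw [hC]; positivity
    calc C * Real.exp (-‖z‖ ^ 2 / (4 * ε)) ≤ C * 1 := by nlinarith
      _ = C := mul_one C
  -- finite measures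
  set ν : Measure E := volume.restrict (Metric.ball (0 : E) r) with hν
  have hνfin : IsFiniteMeasure ν := by
    constructor
    rw [hν, Measure.restrict_apply_univ]
    exact measure_ball_lt_top
  -- joint integrability
  have hjoint : ∀ (m : Measure (E × E)), IsFiniteMeasure m →
      Integrable (fun p : E × E => Phi d ε (p.1 - p.2)) m := by
    intro m hm
    apply Integrable.mono' (integrable_const C)
    · exact (hPhicont.comp (continuous_fst.sub continuous_snd)).aestronglyMeasurable
    · filter_upwards with p
      rw [Real.norm_eq_abs, abs_of_nonneg (Phi_nonneg hε0 _)]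
      exact hPhile _
  have hK : Integrable (fun p : E × E => Phi d ε (p.1 - p.2)) (ν.prod μ) :=
    hjoint _ (by infer_instance)
  have hK2 : Integrable (fun p : E × E => Phi d ε (p.2 - p.1)) (μ.prod ν) := by
    apply Integrable.mono' (integrable_const C)
    · exact (hPhicont.comp (continuous_snd.sub continuous_fst)).aestronglyMeasurable
    · filter_upwards with p
      rw [Real.norm_eq_abs, abs_of_nonneg (Phi_nonneg hε0 _)]
      exact hPhile _
  -- Fubini
  have hswap : (∫ y in Metric.ball (0 : E) r, ∫ x, Phi d ε (y - x) ∂μ)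
      = ∫ x, (∫ y in Metric.ball (0 : E) r, Phi d ε (y - x)) ∂μ :=
    integral_integral_swap hK
  rw [hswap]
  set g : E → ℝ := fun x => ∫ y in Metric.ball (0 : E) r, Phi d ε (y - x) with hg
  have hgint : Integrable g μ := by
    have := hK2.integral_prod_left
    exact this
  have hgnonneg : ∀ x, 0 ≤ g x := by
    intro x
    apply setIntegral_nonneg Metric.isOpen_ball.measurableSet
    intro y _
    exact Phi_nonneg hε0 _
  -- pointwise bound 1
  have h1 : ∀ x : E, g x ≤ 1 := by
    intro x
    have hint : Integrable (fun y : E => Phi d ε (y - x)) :=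
      (Phi_integrable hε0).comp_sub_right x
    calc g x ≤ ∫ y, Phi d ε (y - x) :=
          setIntegral_le_integral hint (Filter.Eventually.of_forall fun y => Phi_nonneg hε0 _)
      _ = ∫ z, Phi d ε z := integral_sub_right_eq_self (Phi d ε) x
      _ = 1 := Phi_int_one hε0
  -- the tail quantity
  set a : ℝ := δ / Real.sqrt d with ha_def
  have hdR : (0:ℝ) < d := Nat.cast_pos.mpr hd
  have ha : 0 < a := div_pos hδpos (Real.sqrt_pos.mpr hdR)
  have ha2 : a ^ 2 = δ ^ 2 / d := by
    rw [ha_def, div_pow, Real.sq_sqrt hdR.le]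
  have hδ2 : δ ^ 2 = d * a ^ 2 := by rw [ha2]; field_simp
  set T : ℝ := d * ∫ t in {t : ℝ | a ≤ |t|}, phi ε t with hT
  have hT0 : 0 ≤ T := by
    rw [hT]
    apply mul_nonneg hdR.le
    apply setIntegral_nonneg (measurableSet_le measurable_const measurable_abs)
    intro t _
    exact phi_nonneg hε0 t
  have hSmeas : MeasurableSet {z : E | δ ≤ ‖z‖} :=
    measurableSet_le measurable_const measurable_norm
  -- pointwise bound 2 for far x
  have h2 : ∀ x : E, r + δ ≤ ‖x‖ → g x ≤ T := by
    intro x hx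
    have hind : ∀ y : E, Set.indicator (Metric.ball (0:E) r) (fun y => Phi d ε (y - x)) y
        ≤ Set.indicator {z : E | δ ≤ ‖z‖} (Phi d ε) (y - x) := by
      intro y
      by_cases hy : y ∈ Metric.ball (0:E) r
      · rw [Set.indicator_of_mem hy]
        have hy' : ‖y‖ < r := by
          rwa [Metric.mem_ball, dist_zero_right] at hy
        have hyx : δ ≤ ‖y - x‖ := by
          have := norm_sub_norm_le x y
          have h3 : ‖x - y‖ = ‖y - x‖ := norm_sub_rev x y
          linarith
        rw [Set.indicator_of_mem (show y - x ∈ {z : E | δ ≤ ‖z‖} from hyx)]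
      · rw [Set.indicator_of_notMem hy]
        exact Set.indicator_nonneg (fun z _ => Phi_nonneg hε0 z) _
    have hint1 : Integrable (Set.indicator (Metric.ball (0:E) r) (fun y => Phi d ε (y - x))) :=
      ((Phi_integrable hε0).comp_sub_right x).indicator Metric.isOpen_ball.measurableSet
    have hint2 : Integrable (fun y : E => Set.indicator {z : E | δ ≤ ‖z‖} (Phi d ε) (y - x)) :=
      ((Phi_integrable hε0).indicator hSmeas).comp_sub_right x
    calc g x = ∫ y, Set.indicator (Metric.ball (0:E) r) (fun y => Phi d ε (y - x)) y :=
          (integral_indicator Metric.isOpen_ball.measurableSet).symm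
      _ ≤ ∫ y, Set.indicator {z : E | δ ≤ ‖z‖} (Phi d ε) (y - x) :=
          integral_mono hint1 hint2 hind
      _ = ∫ z, Set.indicator {z : E | δ ≤ ‖z‖} (Phi d ε) z :=
          integral_sub_right_eq_self _ x
      _ = ∫ z in {z : E | δ ≤ ‖z‖}, Phi d ε z := integral_indicator hSmeas
      _ ≤ T := tail_E hε0 ha hδpos.le hδ2 hd
  -- split the μ-integral
  set N : Set E := Metric.ball (0 : E) (r + δ) with hN
  have hNmeas : MeasurableSet N := Metric.isOpen_ball.measurableSet
  have hsplit : ∫ x, g x ∂μ = (∫ x in N, g x ∂μ) + ∫ x in Nᶜ, g x ∂μ :=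
    (integral_add_compl hNmeas hgint).symm
  have hnear : ∫ x in N, g x ∂μ ≤ (μ N).toReal := by
    calc ∫ x in N, g x ∂μ ≤ ∫ _x in N, (1:ℝ) ∂μ := by
          apply setIntegral_mono_on hgint.integrableOn (integrable_const 1) hNmeas
          intro x _
          exact h1 x
      _ = (μ N).toReal := by rw [MeasureTheory.setIntegral_const]; simp [Measure.real]
  have hfar : ∫ x in Nᶜ, g x ∂μ ≤ T := by
    calc ∫ x in Nᶜ, g x ∂μ ≤ ∫ _x in Nᶜ, T ∂μ := by
          apply setIntegral_mono_on hgint.integrableOn (integrable_const T) hNmeas.compl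
          intro x hx
          apply h2
          rw [hN] at hx
          simp only [Set.mem_compl_iff, Metric.mem_ball, dist_zero_right, not_lt] at hx
          exact hx
      _ = (μ Nᶜ).toReal * T := by rw [MeasureTheory.setIntegral_const]; simp [smul_eq_mul, Measure.real]
      _ ≤ T := by
          have hle : (μ Nᶜ).toReal ≤ 1 := by
            have h1' : μ Nᶜ ≤ 1 := prob_le_one
            have := ENNReal.toReal_mono ENNReal.one_ne_top h1'
            simpa using this
          have h0 : (0:ℝ) ≤ (μ Nᶜ).toReal := ENNReal.toReal_nonneg
          nlinarith [h0, hT0, hle]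
  -- case split on the size of δ
  by_cases hcase : δ ≤ Real.pi / (4 * d)
  · -- main case: T ≤ 2 d exp(-X)
    have hexp_eq : -a ^ 2 / (4 * ε) = -(ε ^ (-(1 : ℝ) / 3)) / (4 * d) := by
      rw [hεinv, ha2, ← hδ3]
      field_simp
    have htail : T ≤ 2 * d * Real.exp (-(ε ^ (-(1 : ℝ) / 3)) / (4 * d)) := by
      have h1d : ∫ t in {t : ℝ | a ≤ |t|}, phi ε t
          ≤ (4 * Real.pi * ε) ^ (-(1:ℝ)/2) * (2 * (4 * ε / a) * Real.exp (-a ^ 2 / (4 * ε))) := by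
        unfold phi
        rw [integral_const_mul]
        apply mul_le_mul_of_nonneg_left (aux_tail_abs hε0 ha) (by positivity)
      have hcoef : (4 * Real.pi * ε) ^ (-(1:ℝ)/2) * (4 * ε / a) ≤ 1 := by
        have hbase : (0:ℝ) < 4 * Real.pi * ε := by positivity
        have hrpow : (4 * Real.pi * ε) ^ (-(1:ℝ)/2) = (Real.sqrt (4 * Real.pi * ε))⁻¹ := by
          rw [show (-1/2 : ℝ) = -(1/2) by norm_num, Real.rpow_neg hbase.le,
            Real.sqrt_eq_rpow]
        rw [hrpow]
        rw [inv_mul_le_iff₀ (Real.sqrt_pos.mpr hbase), mul_one]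
        have h4εa : (0:ℝ) < 4 * ε / a := div_pos (by linarith) ha
        rw [Real.le_sqrt' h4εa]
        -- (4ε/a)^2 ≤ 4πε
        have h4d : (0:ℝ) < 4 * d := by nlinarith [hdR]
        have hπ : 4 * (d:ℝ) * δ ≤ Real.pi := by
          rw [le_div_iff₀ h4d] at hcase
          linarith
        have hsq : (4 * ε / a) ^ 2 ≤ 4 * Real.pi * ε := by
          rw [div_pow, div_le_iff₀ (by positivity : (0:ℝ) < a ^ 2), ha2, ← hδ3,
            ← mul_div_assoc, le_div_iff₀ hdR]
          have hmul := mul_le_mul_of_nonneg_left hπ (by positivity : (0:ℝ) ≤ 4 * δ ^ 5)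
          nlinarith [hmul]
        exact hsq
      rw [hT]
      have := h1d
      have hstep : ∫ t in {t : ℝ | a ≤ |t|}, phi ε t
          ≤ 2 * Real.exp (-a ^ 2 / (4 * ε)) := by
        calc ∫ t in {t : ℝ | a ≤ |t|}, phi ε t
            ≤ (4 * Real.pi * ε) ^ (-(1:ℝ)/2) * (2 * (4 * ε / a) * Real.exp (-a ^ 2 / (4 * ε)))
              := h1d
          _ = 2 * ((4 * Real.pi * ε) ^ (-(1:ℝ)/2) * (4 * ε / a)) * Real.exp (-a ^ 2 / (4 * ε))
              := by ring
          _ ≤ 2 * 1 * Real.exp (-a ^ 2 / (4 * ε)) := by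
              apply mul_le_mul_of_nonneg_right _ (Real.exp_nonneg _)
              nlinarith [hcoef]
          _ = 2 * Real.exp (-a ^ 2 / (4 * ε)) := by ring
      rw [← hexp_eq]
      calc (d : ℝ) * ∫ t in {t : ℝ | a ≤ |t|}, phi ε t
          ≤ d * (2 * Real.exp (-a ^ 2 / (4 * ε))) :=
            mul_le_mul_of_nonneg_left hstep hdR.le
        _ = 2 * d * Real.exp (-a ^ 2 / (4 * ε)) := by ring
    calc ∫ x, g x ∂μ = (∫ x in N, g x ∂μ) + ∫ x in Nᶜ, g x ∂μ := hsplit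
      _ ≤ (μ N).toReal + T := add_le_add hnear hfar
      _ ≤ (μ N).toReal + 2 * d * Real.exp (-(ε ^ (-(1 : ℝ) / 3)) / (4 * d)) :=
          add_le_add_right htail _
  · -- trivial case: RHS ≥ 1 ≥ LHS
    push_neg at hcase
    have hLHS : ∫ x, g x ∂μ ≤ 1 := by
      calc ∫ x, g x ∂μ ≤ ∫ _x, (1:ℝ) ∂μ := integral_mono hgint (integrable_const 1) h1
        _ = 1 := by simp
    have hRHS : (1:ℝ) ≤ 2 * d * Real.exp (-(ε ^ (-(1 : ℝ) / 3)) / (4 * d)) := by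
      have hπ3 : (3:ℝ) < Real.pi := Real.pi_gt_three
      have h4d : (0:ℝ) < 4 * d := by
        have : (0:ℝ) < d := Nat.cast_pos.mpr hd
        nlinarith
      have hpi : (0:ℝ) < Real.pi := Real.pi_pos
      have hX : ε ^ (-(1 : ℝ) / 3) / (4 * d) < 1 / Real.pi := by
        have hcase' : Real.pi < δ * (4 * d) := by
          rw [div_lt_iff₀ h4d] at hcase; exact hcase
        have hδinv : δ⁻¹ * Real.pi < 4 * (d:ℝ) := by
          rw [inv_mul_lt_iff₀ hδpos]
          linarith [hcase']
        rw [hεinv, div_lt_div_iff₀ h4d hpi, one_mul]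
        exact hδinv
      have hexp : Real.exp (-(ε ^ (-(1 : ℝ) / 3)) / (4 * d))
          ≥ 1 - ε ^ (-(1 : ℝ) / 3) / (4 * d) := by
        have := Real.add_one_le_exp (-(ε ^ (-(1 : ℝ) / 3)) / (4 * d))
        have heq : -(ε ^ (-(1 : ℝ) / 3)) / (4 * d) = -(ε ^ (-(1 : ℝ) / 3) / (4 * d)) := by ring
        rw [heq] at this ⊢
        linarith
      have hd1 : (1:ℝ) ≤ d := by exact_mod_cast hd
      have h13 : (1:ℝ)/Real.pi < 1/3 := by
        rw [div_lt_div_iff₀ (by positivity) (by norm_num)]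
        linarith
      nlinarith [Real.exp_nonneg (-(ε ^ (-(1 : ℝ) / 3)) / (4 * d)), hexp, hX, h13, hd1]
    have hμN : (0:ℝ) ≤ (μ N).toReal := ENNReal.toReal_nonneg
    calc ∫ x, g x ∂μ ≤ 1 := hLHS
      _ ≤ (μ N).toReal + 2 * d * Real.exp (-(ε ^ (-(1 : ℝ) / 3)) / (4 * d)) := by linarith
end

section
/- Let (Y_n)_{n≥0} be a time-homogeneous Markov chain on a measurable state space S, let Λ' ⊆ S be measurable, and suppose sup_{x∈Λ'} E_x[τ_{Λ'}] = C < ∞ where τ_{Λ'} = inf{n ≥ 1 : Y_n ∈ Λ'}, and P_x(τ_{Λ'} < ∞) = 1 for all x. Define τ(0) = 0 and τ(k) = inf{n ≥ 1 + τ(k-1) : Y_n ∈ Λ'}. Suppose additionally there are n₁ ∈ ℕ and another measurable set Λ ⊆ Λ' with sup_{x∈Λ'} P_x(Y_{n₁} ∉ Λ) ≤ 1/2. Let k* = inf{k ≥ 1 : Y_{τ(k)+n₁} ∈ Λ}. Then for x ∈ Λ' and all k ∈ ℕ, P_x(k* > k) ≤ 2^{-⌊k/n₁⌋}, and E_x[τ(k*)]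 ≤ C Σ_{ℓ≥1} 2^{-⌊(ℓ-1-n₁)/n₁⌋} < ∞. -/
open MeasureTheory
open scoped ENNReal

set_option linter.unusedSectionVars false
set_option maxHeartbeats 1000000

/-- The `k`-th return time to `Λ'` (with at least one step between successive returns);
`sInf` of an empty set is `0` by convention (the hypotheses make the relevant sets
almost surely nonempty). -/
noncomputable def retTime {S : Type*} (Λ' : Set S) (ω : ℕ → S) : ℕ → ℕ
  | 0 => 0
  | k + 1 => sInf {n | retTime Λ' ω k + 1 ≤ n ∧ ω n ∈ Λ'}

namespace StrongAux

variable {S : Type*} [MeasurableSpace S]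


/-- `Good Λ' k ω`: the first `k` return times are strictly increasing. -/
def Good (Λ' : Set S) (k : ℕ) (ω : ℕ → S) : Prop :=
  ∀ j < k, retTime Λ' ω j < retTime Λ' ω (j + 1)

lemma Good.mono {Λ' : Set S} {k k' : ℕ} {ω : ℕ → S} (h : Good Λ' k' ω) (hk : k ≤ k') :
    Good Λ' k ω := fun j hj => h j (lt_of_lt_of_le hj hk)

lemma Good.succ_mem {Λ' : Set S} {k : ℕ} {ω : ℕ → S} (h : Good Λ' k ω) {j : ℕ} (hj : j < k) :
    retTime Λ' ω j + 1 ≤ retTime Λ' ω (j+1) ∧ ω (retTime Λ' ω (j+1)) ∈ Λ' := by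
  have hlt := h j hj
  have hne : {n | retTime Λ' ω j + 1 ≤ n ∧ ω n ∈ Λ'}.Nonempty := by
    by_contra hemp
    have : retTime Λ' ω (j+1) = 0 := by
      show sInf _ = 0
      rw [Set.not_nonempty_iff_eq_empty] at hemp
      rw [hemp]; exact Nat.sInf_empty
    omega
  have := Nat.sInf_mem hne
  exact this

lemma Good.add_le {Λ' : Set S} {l : ℕ} {ω : ℕ → S} (h : Good Λ' l ω) {i d : ℕ}
    (hd : i + d ≤ l) : retTime Λ' ω i + d ≤ retTime Λ' ω (i + d) := by
  induction d with
  | zero => simp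
  | succ d ih =>
    have h1 : retTime Λ' ω i + d ≤ retTime Λ' ω (i+d) := ih (by omega)
    have h2 : retTime Λ' ω (i+d) < retTime Λ' ω (i+d+1) := h _ (by omega)
    have : i + (d+1) = (i+d)+1 := by omega
    rw [this]; omega

lemma Good.mono_t {Λ' : Set S} {l : ℕ} {ω : ℕ → S} (h : Good Λ' l ω) {i j : ℕ}
    (hij : i ≤ j) (hjl : j ≤ l) : retTime Λ' ω i ≤ retTime Λ' ω j := by
  have := h.add_le (i := i) (d := j - i) (by omega)
  have hji : i + (j - i) = j := by omega
  rw [hji] at this; omega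

lemma Good.self_le {Λ' : Set S} {l : ℕ} {ω : ℕ → S} (h : Good Λ' l ω) {i : ℕ} (hi : i ≤ l) :
    i ≤ retTime Λ' ω i := by
  have := h.add_le (i := 0) (d := i) (by omega)
  simpa [retTime] using this

lemma Good.mem_of_pos {Λ' : Set S} {l : ℕ} {ω : ℕ → S} (h : Good Λ' l ω) {j : ℕ}
    (h1 : 1 ≤ j) (hjl : j ≤ l) : ω (retTime Λ' ω j) ∈ Λ' := by
  obtain ⟨j', rfl⟩ : ∃ j', j = j' + 1 := ⟨j - 1, by omega⟩
  exact (h.succ_mem (by omega)).2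

/-- characterization of `sInf` over ℕ. -/
lemma nat_sInf_eq_iff {s : Set ℕ} {n : ℕ} :
    sInf s = n ↔ (n ∈ s ∧ ∀ m < n, m ∉ s) ∨ (n = 0 ∧ ∀ m, m ∉ s) := by
  constructor
  · intro h
    rcases s.eq_empty_or_nonempty with rfl | hne
    · right; exact ⟨by simpa [Nat.sInf_empty] using h.symm, by simp⟩
    · left
      refine ⟨h ▸ Nat.sInf_mem hne, fun m hm => Nat.notMem_of_lt_sInf (h ▸ hm)⟩
  · rintro (⟨hn, hmin⟩ | ⟨rfl, hemp⟩)
    · exact le_antisymm (Nat.sInf_le hn)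
        (le_csInf ⟨n, hn⟩ fun m hm => by by_contra hc; exact hmin m (by omega) hm)
    · have : s = ∅ := Set.eq_empty_iff_forall_notMem.mpr hemp
      rw [this]; exact Nat.sInf_empty


lemma measurable_retTime (Λ' : Set S) (hΛ' : MeasurableSet Λ') (k : ℕ) :
    Measurable (fun ω : ℕ → S => retTime Λ' ω k) := by
  induction k with
  | zero => simpa [retTime] using measurable_const
  | succ k ih =>
    apply measurable_to_countable'
    intro n
    have hco : ∀ t m : ℕ, MeasurableSet {ω : ℕ → S | ¬(t + 1 ≤ m ∧ ω m ∈ Λ')} := by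
      intro t m
      by_cases h : t + 1 ≤ m
      · have : {ω : ℕ → S | ¬(t + 1 ≤ m ∧ ω m ∈ Λ')} = {ω : ℕ → S | ω m ∈ Λ'}ᶜ := by
          ext ω; simp [h]
        rw [this]; exact ((measurable_pi_apply m) hΛ').compl
      · have : {ω : ℕ → S | ¬(t + 1 ≤ m ∧ ω m ∈ Λ')} = Set.univ := by ext ω; simp [h]
        rw [this]; exact MeasurableSet.univ
    have hco2 : ∀ t m : ℕ, MeasurableSet {ω : ℕ → S | t + 1 ≤ m ∧ ω m ∈ Λ'} := by
      intro t m
      have := (hco t m).compl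
      simpa [Set.compl_setOf] using this
    have : (fun ω : ℕ → S => retTime Λ' ω (k+1)) ⁻¹' {n}
        = ⋃ t : ℕ, ((fun ω : ℕ → S => retTime Λ' ω k) ⁻¹' {t}) ∩
          (({ω : ℕ → S | t + 1 ≤ n ∧ ω n ∈ Λ'} ∩
              ⋂ m : ℕ, ⋂ (_ : m < n), {ω : ℕ → S | ¬(t + 1 ≤ m ∧ ω m ∈ Λ')})
            ∪ ((if n = 0 then Set.univ else ∅) ∩
              ⋂ m : ℕ, {ω : ℕ → S | ¬(t + 1 ≤ m ∧ ω m ∈ Λ')})) := by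
      ext ω
      simp only [Set.mem_preimage, Set.mem_singleton_iff, Set.mem_iUnion, Set.mem_inter_iff,
        Set.mem_setOf_eq, Set.mem_union, Set.mem_iInter]
      constructor
      · intro h
        refine ⟨retTime Λ' ω k, rfl, ?_⟩
        have := (nat_sInf_eq_iff (s := {n | retTime Λ' ω k + 1 ≤ n ∧ ω n ∈ Λ'}) (n := n)).mp h
        rcases this with ⟨h1, h2⟩ | ⟨h1, h2⟩
        · exact Or.inl ⟨h1, fun m hm => h2 m hm⟩
        · refine Or.inr ⟨by simp [h1], fun m => h2 m⟩
      · rintro ⟨t, rfl, h⟩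
        show sInf _ = n
        rw [nat_sInf_eq_iff]
        rcases h with ⟨h1, h2⟩ | ⟨h1, h2⟩
        · exact Or.inl ⟨h1, fun m hm => h2 m hm⟩
        · refine Or.inr ⟨?_, fun m => h2 m⟩
          by_contra hc
          simp [hc] at h1
    rw [this]
    apply MeasurableSet.iUnion
    intro t
    apply (ih (MeasurableSet.singleton t)).inter
    apply MeasurableSet.union
    · exact (hco2 t n).inter (MeasurableSet.iInter fun m =>
        MeasurableSet.iInter fun _ => hco t m)
    · refine MeasurableSet.inter ?_ (MeasurableSet.iInter fun m => hco t m)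
      by_cases h : n = 0 <;> simp [h]

/-- The σ-algebra of events depending on the first `n+1` coordinates. -/
def Fn (S : Type*) [MeasurableSpace S] (n : ℕ) : MeasurableSpace (ℕ → S) :=
  MeasurableSpace.comap (fun (ω : ℕ → S) (i : Fin (n+1)) => ω i) inferInstance

lemma measurable_proj (n : ℕ) : Measurable (fun (ω : ℕ → S) (i : Fin (n+1)) => ω i) :=
  measurable_pi_lambda _ fun i => measurable_pi_apply _

lemma Fn_le (n : ℕ) : Fn S n ≤ MeasurableSpace.pi :=
  (measurable_proj n).comap_le

lemma Fn_mono {m n : ℕ} (h : m ≤ n) : Fn S m ≤ Fn S n := by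
  have hres : Measurable (fun (v : Fin (n+1) → S) (i : Fin (m+1)) => v ⟨i, by omega⟩) :=
    measurable_pi_lambda _ fun i => measurable_pi_apply _
  have : Fn S m = MeasurableSpace.comap (fun (ω : ℕ → S) (i : Fin (n+1)) => ω i)
      (MeasurableSpace.comap (fun (v : Fin (n+1) → S) (i : Fin (m+1)) => v ⟨i, by omega⟩)
        inferInstance) := by
    rw [MeasurableSpace.comap_comp]; rfl
  rw [this]
  exact MeasurableSpace.comap_mono hres.comap_le

lemma Fn_coord {n j : ℕ} (hj : j ≤ n) {B : Set S} (hB : MeasurableSet B) :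
    MeasurableSet[Fn S n] {ω : ℕ → S | ω j ∈ B} := by
  exact MeasurableSpace.measurableSet_comap.mpr
    ⟨{v : Fin (n+1) → S | v ⟨j, by omega⟩ ∈ B}, by exact measurable_pi_apply _ hB, rfl⟩


/-- `Good k` together with `retTime k = n` is an event of the first `n+1` coordinates. -/
lemma Dset_mem (hΛ' : MeasurableSet Λ') (k : ℕ) (n : ℕ) :
    MeasurableSet[Fn S n] {ω : ℕ → S | Good Λ' k ω ∧ retTime Λ' ω k = n} := by
  induction k generalizing n with
  | zero =>
    by_cases h : n = 0
    · subst h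
      have : {ω : ℕ → S | Good Λ' 0 ω ∧ retTime Λ' ω 0 = 0} = Set.univ := by
        ext ω; simp [Good, retTime]
      rw [this]; exact @MeasurableSet.univ _ (Fn S 0)
    · have : {ω : ℕ → S | Good Λ' 0 ω ∧ retTime Λ' ω 0 = n} = ∅ := by
        ext ω; simp [Good, retTime]; omega
      rw [this]; exact @MeasurableSet.empty _ (Fn S n)
  | succ k ih =>
    have key : {ω : ℕ → S | Good Λ' (k+1) ω ∧ retTime Λ' ω (k+1) = n}
        = ⋃ m : ℕ, ⋃ (_ : m < n),
            ({ω : ℕ → S | Good Λ' k ω ∧ retTime Λ' ω k = m} ∩ {ω : ℕ → S | ω n ∈ Λ'} ∩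
              ⋂ i : ℕ, ⋂ (_ : m + 1 ≤ i) (_ : i < n), {ω : ℕ → S | ω i ∈ Λ'}ᶜ) := by
      ext ω
      simp only [Set.mem_setOf_eq, Set.mem_iUnion, Set.mem_inter_iff, Set.mem_iInter,
        Set.mem_compl_iff]
      constructor
      · rintro ⟨hg, hτ⟩
        refine ⟨retTime Λ' ω k, ?_, ⟨⟨hg.mono (by omega), rfl⟩, ?_⟩, ?_⟩
        · have := hg k (by omega); omega
        · -- ω n ∈ Λ'
          have hlt := hg k (by omega)
          have hne : {i | retTime Λ' ω k + 1 ≤ i ∧ ω i ∈ Λ'}.Nonempty := by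
            by_contra hemp
            rw [Set.not_nonempty_iff_eq_empty] at hemp
            have : retTime Λ' ω (k+1) = 0 := by
              show sInf _ = 0; rw [hemp]; exact Nat.sInf_empty
            omega
          have hmem := Nat.sInf_mem hne
          show ω n ∈ Λ'
          have : sInf {i | retTime Λ' ω k + 1 ≤ i ∧ ω i ∈ Λ'} = n := hτ
          rw [this] at hmem
          exact hmem.2
        · intro i h1 h2
          intro hc
          have : i ∈ {i | retTime Λ' ω k + 1 ≤ i ∧ ω i ∈ Λ'} := ⟨h1, hc⟩
          have := Nat.sInf_le this
          rw [show sInf {i | retTime Λ' ω k + 1 ≤ i ∧ ω i ∈ Λ'} = retTime Λ' ω (k+1) from rfl,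
            hτ] at this
          omega
      · rintro ⟨m, hmn, ⟨⟨hg, hτ⟩, hn⟩, hgap⟩
        have hτ1 : retTime Λ' ω (k+1) = n := by
          show sInf {i | retTime Λ' ω k + 1 ≤ i ∧ ω i ∈ Λ'} = n
          rw [hτ]
          have hnmem : n ∈ {i | m + 1 ≤ i ∧ ω i ∈ Λ'} := ⟨by omega, hn⟩
          refine le_antisymm (Nat.sInf_le hnmem) ?_
          refine le_csInf ⟨n, hnmem⟩ ?_
          rintro b ⟨hb1, hb2⟩
          by_contra hc
          exact hgap b hb1 (by omega) hb2
        refine ⟨?_, hτ1⟩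
        intro j hj
        rcases Nat.lt_succ_iff_lt_or_eq.mp hj with hj' | rfl
        · exact hg j hj'
        · rw [hτ1, hτ]; omega
    rw [key]
    apply MeasurableSet.iUnion; intro m
    apply MeasurableSet.iUnion; intro hmn
    refine MeasurableSet.inter (MeasurableSet.inter ?_ ?_) ?_
    · exact Fn_mono (by omega) _ (ih m)
    · exact Fn_coord le_rfl hΛ'
    · refine MeasurableSet.iInter fun i => MeasurableSet.iInter fun _ =>
        MeasurableSet.iInter fun hi => (Fn_coord (by omega) hΛ').compl

/-- The master event for the strong-Markov decomposition. -/
def MSet (Λ Λ' : Set S) (n₁ b l n : ℕ) : Set (ℕ → S) :=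
  {ω : ℕ → S | (Good Λ' l ω ∧ retTime Λ' ω l = n) ∧ ω 0 ∈ Λ' ∧
    ∀ j, 1 ≤ j → j ≤ b → ω (retTime Λ' ω j + n₁) ∉ Λ}

lemma MSet_mem (hΛ' : MeasurableSet Λ') {Λ : Set S} (hΛ : MeasurableSet Λ)
    {n₁ b l n : ℕ} (hbl : ∀ j, 1 ≤ j → j ≤ b → j + n₁ ≤ l) :
    MeasurableSet[Fn S n] (MSet Λ Λ' n₁ b l n) := by
  have key : MSet Λ Λ' n₁ b l n
      = {ω : ℕ → S | Good Λ' l ω ∧ retTime Λ' ω l = n} ∩ {ω : ℕ → S | ω 0 ∈ Λ'} ∩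
        ⋂ j : ℕ, ⋂ (_ : 1 ≤ j) (_ : j ≤ b),
          ⋃ m : ℕ, ⋃ (_ : m + n₁ ≤ n),
            ({ω : ℕ → S | Good Λ' j ω ∧ retTime Λ' ω j = m} ∩ {ω : ℕ → S | ω (m + n₁) ∈ Λ}ᶜ) := by
    ext ω
    simp only [MSet, Set.mem_setOf_eq, Set.mem_inter_iff, Set.mem_iInter, Set.mem_iUnion,
      Set.mem_compl_iff]
    constructor
    · rintro ⟨⟨hg, hτ⟩, h0, hfail⟩
      refine ⟨⟨⟨hg, hτ⟩, h0⟩, ?_⟩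
      intro j h1 h2
      have hjl : j + n₁ ≤ l := hbl j h1 h2
      refine ⟨retTime Λ' ω j, ?_, ⟨hg.mono (by omega), rfl⟩, hfail j h1 h2⟩
      have h3 : retTime Λ' ω j + n₁ ≤ retTime Λ' ω (j + n₁) := hg.add_le hjl
      have h4 : retTime Λ' ω (j + n₁) + (l - (j + n₁)) ≤ retTime Λ' ω l := by
        have := hg.add_le (i := j + n₁) (d := l - (j + n₁)) (by omega)
        rwa [show j + n₁ + (l - (j + n₁)) = l by omega] at this
      omega
    · rintro ⟨⟨⟨hg, hτ⟩, h0⟩, hfail⟩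
      refine ⟨⟨hg, hτ⟩, h0, ?_⟩
      intro j h1 h2
      obtain ⟨m, _, ⟨_, hm⟩, hnotin⟩ := hfail j h1 h2
      rwa [hm]
  rw [key]
  refine MeasurableSet.inter (MeasurableSet.inter (Dset_mem hΛ' l n) ?_) ?_
  · exact Fn_coord (by omega) hΛ'
  · refine MeasurableSet.iInter fun j => MeasurableSet.iInter fun h1 =>
      MeasurableSet.iInter fun h2 => MeasurableSet.iUnion fun m =>
      MeasurableSet.iUnion fun hm => MeasurableSet.inter ?_ ?_
    · exact Fn_mono (by omega) _ (Dset_mem hΛ' j m)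
    · exact (Fn_coord (by omega) hΛ).compl


/-- first-return functional -/
noncomputable def fret (Λ' : Set S) (ω : ℕ → S) : ℝ≥0∞ :=
  ⨅ n ∈ {n : ℕ | 1 ≤ n ∧ ω n ∈ Λ'}, (n : ℝ≥0∞)

lemma measurable_fret {Λ' : Set S} (hΛ' : MeasurableSet Λ') : Measurable (fret Λ') := by
  classical
  have hfr : fret Λ' = fun ω => ⨅ m : ℕ,
      (if 1 ≤ m ∧ ω m ∈ Λ' then (m : ℝ≥0∞) else ⊤) := by
    funext ω
    rw [fret]
    congr 1
    funext m
    by_cases h : 1 ≤ m ∧ ω m ∈ Λ'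
    · rw [if_pos h]; exact iInf_pos h
    · rw [if_neg h]; exact iInf_neg h
  rw [hfr]
  refine Measurable.iInf fun m => ?_
  by_cases h1 : 1 ≤ m
  · have : (fun ω : ℕ → S => if 1 ≤ m ∧ ω m ∈ Λ' then (m : ℝ≥0∞) else ⊤)
        = {ω : ℕ → S | ω m ∈ Λ'}.indicator (fun _ => (m : ℝ≥0∞)) + 
          {ω : ℕ → S | ω m ∈ Λ'}ᶜ.indicator (fun _ => ⊤) := by
      funext ω
      by_cases h : ω m ∈ Λ'
      · simp [h, h1, Set.indicator_of_mem, Set.indicator_of_notMem]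
      · simp [h, h1, Set.indicator_of_mem, Set.indicator_of_notMem]
    rw [this]
    exact (measurable_const.indicator ((measurable_pi_apply m) hΛ')).add
      (measurable_const.indicator ((measurable_pi_apply m) hΛ').compl)
  · simpa [h1] using measurable_const

/-- Key strong-Markov computation. -/
lemma SMkey (P : S → Measure (ℕ → S)) (x : S)
    (hMarkov : ∀ (x : S) (n : ℕ) (f : (ℕ → S) → ℝ≥0∞), Measurable f →
      ∀ g : (Fin (n + 1) → S) → ℝ≥0∞, Measurable g →
      (∫⁻ ω, g (fun k => ω k) * (∫⁻ ω', f ω' ∂(P (ω n))) ∂(P x))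
        = ∫⁻ ω, g (fun k => ω k) * f (fun j => ω (n + j)) ∂(P x))
    {n : ℕ} {B : Set (ℕ → S)} (hB : MeasurableSet[Fn S n] B)
    {f : (ℕ → S) → ℝ≥0∞} (hf : Measurable f) :
    ∫⁻ ω in B, f (fun j => ω (n + j)) ∂(P x)
      = ∫⁻ ω in B, (∫⁻ ω', f ω' ∂(P (ω n))) ∂(P x) := by
  obtain ⟨A, hA, hpre⟩ := MeasurableSpace.measurableSet_comap.mp hB
  set g : (Fin (n+1) → S) → ℝ≥0∞ := A.indicator (fun _ => 1) with hg_def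
  have hg : Measurable g := measurable_const.indicator hA
  have hBm : MeasurableSet B := Fn_le n _ hB
  have key := hMarkov x n f hf g hg
  have e1 : ∀ (c : (ℕ → S) → ℝ≥0∞),
      (fun ω => g (fun k => ω k) * c ω) = B.indicator c := by
    intro c; funext ω
    by_cases hω : ω ∈ B
    · have : (fun k : Fin (n+1) => ω k) ∈ A := by
        rw [← hpre] at hω; exact hω
      simp [hg_def, Set.indicator_of_mem, this, hω]
    · have : (fun k : Fin (n+1) => ω k) ∉ A := by
        rw [← hpre] at hω; exact hω
      simp [hg_def, Set.indicator_of_notMem, this, hω]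
  rw [e1, e1] at key
  rw [lintegral_indicator hBm, lintegral_indicator hBm] at key
  exact key.symm


/-- Half-step: conditional failure probability. -/
lemma halfStep (P : S → Measure (ℕ → S)) (x : S)
    (hMarkov : ∀ (x : S) (n : ℕ) (f : (ℕ → S) → ℝ≥0∞), Measurable f →
      ∀ g : (Fin (n + 1) → S) → ℝ≥0∞, Measurable g →
      (∫⁻ ω, g (fun k => ω k) * (∫⁻ ω', f ω' ∂(P (ω n))) ∂(P x))
        = ∫⁻ ω, g (fun k => ω k) * f (fun j => ω (n + j)) ∂(P x))
    {Λ Λ' : Set S} (hΛm : MeasurableSet Λ) {n₁ : ℕ}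
    (hhalf : ∀ y ∈ Λ', P y {ω | ω n₁ ∉ Λ} ≤ 1 / 2) {n : ℕ}
    {B : Set (ℕ → S)} (hB : MeasurableSet[Fn S n] B) (hBΛ' : ∀ ω ∈ B, ω n ∈ Λ') :
    P x (B ∩ {ω | ω (n + n₁) ∉ Λ}) ≤ (1 / 2) * P x B := by
  have hBm : MeasurableSet B := Fn_le n _ hB
  set f : (ℕ → S) → ℝ≥0∞ := ({ω' : ℕ → S | ω' n₁ ∈ Λ}ᶜ).indicator (fun _ => 1) with hf_def
  have hcm : MeasurableSet {ω' : ℕ → S | ω' n₁ ∈ Λ}ᶜ := ((measurable_pi_apply n₁) hΛm).compl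
  have hcm' : MeasurableSet {ω : ℕ → S | ω (n + n₁) ∈ Λ}ᶜ :=
    ((measurable_pi_apply (n + n₁)) hΛm).compl
  have hf : Measurable f := measurable_const.indicator hcm
  have e0 : ∀ ω : ℕ → S, f (fun j => ω (n + j))
      = ({ω : ℕ → S | ω (n + n₁) ∈ Λ}ᶜ).indicator (fun _ => (1:ℝ≥0∞)) ω := by
    intro ω
    by_cases h : ω (n + n₁) ∈ Λ
    · simp [hf_def, Set.indicator_of_mem, Set.indicator_of_notMem, h]
    · simp [hf_def, Set.indicator_of_mem, Set.indicator_of_notMem, h]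
  have e1 : ∫⁻ ω in B, f (fun j => ω (n + j)) ∂(P x) = P x (B ∩ {ω | ω (n + n₁) ∉ Λ}) := by
    rw [lintegral_congr e0]
    rw [lintegral_indicator hcm']
    rw [Measure.restrict_restrict hcm', setLIntegral_one]
    congr 1
    ext ω; simp only [Set.mem_inter_iff, Set.mem_compl_iff, Set.mem_setOf_eq]; tauto
  have e2 := SMkey P x hMarkov hB hf
  have e3 : ∀ ω ∈ B, (∫⁻ ω', f ω' ∂(P (ω n))) ≤ 1 / 2 := by
    intro ω hω
    have h4 : (∫⁻ ω', f ω' ∂(P (ω n))) = P (ω n) {ω' | ω' n₁ ∈ Λ}ᶜ := by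
      exact lintegral_indicator_one hcm
    rw [h4]
    have h5 : {ω' : ℕ → S | ω' n₁ ∈ Λ}ᶜ = {ω' : ℕ → S | ω' n₁ ∉ Λ} := by ext; simp
    rw [h5]
    exact hhalf _ (hBΛ' ω hω)
  calc P x (B ∩ {ω | ω (n + n₁) ∉ Λ}) = ∫⁻ ω in B, f (fun j => ω (n + j)) ∂(P x) := e1.symm
    _ = ∫⁻ ω in B, (∫⁻ ω', f ω' ∂(P (ω n))) ∂(P x) := e2
    _ ≤ ∫⁻ _ω in B, (1/2 : ℝ≥0∞) ∂(P x) := setLIntegral_mono' hBm e3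
    _ = (1/2) * P x B := by rw [setLIntegral_const]

/-- Return-step: expected next return increment. -/
lemma retStep (P : S → Measure (ℕ → S)) (x : S)
    (hMarkov : ∀ (x : S) (n : ℕ) (f : (ℕ → S) → ℝ≥0∞), Measurable f →
      ∀ g : (Fin (n + 1) → S) → ℝ≥0∞, Measurable g →
      (∫⁻ ω, g (fun k => ω k) * (∫⁻ ω', f ω' ∂(P (ω n))) ∂(P x))
        = ∫⁻ ω, g (fun k => ω k) * f (fun j => ω (n + j)) ∂(P x))
    {Λ' : Set S} (hΛ'm : MeasurableSet Λ') {C : ℝ≥0∞}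
    (hret : ∀ y ∈ Λ', (∫⁻ ω, fret Λ' ω ∂(P y)) ≤ C) {n : ℕ}
    {B : Set (ℕ → S)} (hB : MeasurableSet[Fn S n] B) (hBΛ' : ∀ ω ∈ B, ω n ∈ Λ') :
    ∫⁻ ω in B, fret Λ' (fun j => ω (n + j)) ∂(P x) ≤ C * P x B := by
  have hBm : MeasurableSet B := Fn_le n _ hB
  rw [SMkey P x hMarkov hB (measurable_fret hΛ'm)]
  calc ∫⁻ ω in B, (∫⁻ ω', fret Λ' ω' ∂(P (ω n))) ∂(P x)
      ≤ ∫⁻ _ω in B, C ∂(P x) := setLIntegral_mono' hBm fun ω hω => hret _ (hBΛ' ω hω)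
    _ = C * P x B := by rw [setLIntegral_const]


def Gset (Λ' : Set S) : Set (ℕ → S) := {ω : ℕ → S | ∀ m : ℕ, ∃ n, m < n ∧ ω n ∈ Λ'}

lemma Gset_meas {Λ' : Set S} (hΛ' : MeasurableSet Λ') : MeasurableSet (Gset Λ') := by
  have : Gset Λ' = ⋂ m : ℕ, ⋃ n : ℕ, ⋃ (_ : m < n), {ω : ℕ → S | ω n ∈ Λ'} := by
    ext ω; simp [Gset]
  rw [this]
  exact MeasurableSet.iInter fun m => MeasurableSet.iUnion fun n =>
    MeasurableSet.iUnion fun _ => (measurable_pi_apply n) hΛ'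

lemma Gset_good {Λ' : Set S} {ω : ℕ → S} (hω : ω ∈ Gset Λ') (k : ℕ) : Good Λ' k ω := by
  intro j _
  obtain ⟨n, hn, hmem⟩ := hω (retTime Λ' ω j)
  have hne : {i | retTime Λ' ω j + 1 ≤ i ∧ ω i ∈ Λ'}.Nonempty := ⟨n, by omega, hmem⟩
  obtain ⟨h1', -⟩ := Nat.sInf_mem hne
  show retTime Λ' ω j < sInf {i | retTime Λ' ω j + 1 ≤ i ∧ ω i ∈ Λ'}
  omega

lemma Gset_ae (P : S → Measure (ℕ → S)) (hP : ∀ y, IsProbabilityMeasure (P y)) (x : S)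
    (hMarkov : ∀ (x : S) (n : ℕ) (f : (ℕ → S) → ℝ≥0∞), Measurable f →
      ∀ g : (Fin (n + 1) → S) → ℝ≥0∞, Measurable g →
      (∫⁻ ω, g (fun k => ω k) * (∫⁻ ω', f ω' ∂(P (ω n))) ∂(P x))
        = ∫⁻ ω, g (fun k => ω k) * f (fun j => ω (n + j)) ∂(P x))
    {Λ' : Set S} (hΛ' : MeasurableSet Λ')
    (hfin : ∀ y : S, P y {ω | ∃ n, 1 ≤ n ∧ ω n ∈ Λ'} = 1) :
    P x (Gset Λ') = 1 := by
  have := hP x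
  set hit : Set (ℕ → S) := {ω' | ∃ n, 1 ≤ n ∧ ω' n ∈ Λ'} with hhit
  have hhitm : MeasurableSet hit := by
    have : hit = ⋃ n : ℕ, ⋃ (_ : 1 ≤ n), {ω' : ℕ → S | ω' n ∈ Λ'} := by
      ext ω'; simp [hhit]
    rw [this]
    exact MeasurableSet.iUnion fun n => MeasurableSet.iUnion fun _ =>
      (measurable_pi_apply n) hΛ'
  have hGm : ∀ m : ℕ, P x {ω : ℕ → S | ∃ n, m < n ∧ ω n ∈ Λ'} = 1 := by
    intro m
    set f : (ℕ → S) → ℝ≥0∞ := hit.indicator (fun _ => 1) with hf_def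
    have hf : Measurable f := measurable_const.indicator hhitm
    have hu : MeasurableSet[Fn S m] (Set.univ : Set (ℕ → S)) := @MeasurableSet.univ _ (Fn S m)
    have key := SMkey P x hMarkov hu hf
    have hθ : Measurable (fun (ω : ℕ → S) (j : ℕ) => ω (m + j)) :=
      measurable_pi_lambda _ fun j => measurable_pi_apply _
    have hpre : MeasurableSet ((fun (ω : ℕ → S) (j : ℕ) => ω (m + j)) ⁻¹' hit) := hθ hhitm
    have e1 : ∫⁻ ω in Set.univ, f (fun j => ω (m + j)) ∂(P x)
        = P x ((fun (ω : ℕ → S) (j : ℕ) => ω (m + j)) ⁻¹' hit) := by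
      rw [Measure.restrict_univ]
      have : (fun ω : ℕ → S => f (fun j => ω (m + j)))
          = ((fun (ω : ℕ → S) (j : ℕ) => ω (m + j)) ⁻¹' hit).indicator (fun _ => 1) := by
        funext ω
        by_cases h : (fun j => ω (m + j)) ∈ hit
        · simp [hf_def, Set.indicator_of_mem, Set.indicator_of_notMem, h,
            Set.mem_preimage]
        · simp [hf_def, Set.indicator_of_mem, Set.indicator_of_notMem, h,
            Set.mem_preimage]
      rw [this]
      exact lintegral_indicator_one hpre
    have e2 : ∫⁻ ω in Set.univ, (∫⁻ ω', f ω' ∂(P (ω m))) ∂(P x) = 1 := by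
      have : ∀ ω : ℕ → S, (∫⁻ ω', f ω' ∂(P (ω m))) = 1 := by
        intro ω
        rw [hf_def]
        have := lintegral_indicator_one (μ := P (ω m)) hhitm
        rw [show (hit.indicator (fun _ => (1:ℝ≥0∞))) = hit.indicator 1 from rfl]
        rw [this]
        exact hfin (ω m)
      rw [Measure.restrict_univ, lintegral_congr this, lintegral_one, measure_univ]
    have hpre1 : P x ((fun (ω : ℕ → S) (j : ℕ) => ω (m + j)) ⁻¹' hit) = 1 := by
      rw [← e1, key, e2]
    have hsub : ((fun (ω : ℕ → S) (j : ℕ) => ω (m + j)) ⁻¹' hit)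
        ⊆ {ω : ℕ → S | ∃ n, m < n ∧ ω n ∈ Λ'} := by
      rintro ω ⟨n, hn1, hn2⟩
      exact ⟨m + n, by omega, hn2⟩
    refine le_antisymm prob_le_one ?_
    rw [← hpre1]
    exact measure_mono hsub
  have hcompl : ∀ m : ℕ, P x {ω : ℕ → S | ∃ n, m < n ∧ ω n ∈ Λ'}ᶜ = 0 := by
    intro m
    have hm : MeasurableSet {ω : ℕ → S | ∃ n, m < n ∧ ω n ∈ Λ'} := by
      have : {ω : ℕ → S | ∃ n, m < n ∧ ω n ∈ Λ'}
          = ⋃ n : ℕ, ⋃ (_ : m < n), {ω : ℕ → S | ω n ∈ Λ'} := by ext ω; simp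
      rw [this]
      exact MeasurableSet.iUnion fun n => MeasurableSet.iUnion fun _ =>
        (measurable_pi_apply n) hΛ'
    rw [measure_compl hm (measure_ne_top _ _), hGm m, measure_univ, tsub_self]
  have h1 : P x (Gset Λ')ᶜ = 0 := by
    have : (Gset Λ')ᶜ ⊆ ⋃ m : ℕ, {ω : ℕ → S | ∃ n, m < n ∧ ω n ∈ Λ'}ᶜ := by
      intro ω hω
      simp only [Gset, Set.mem_compl_iff, Set.mem_setOf_eq, not_forall] at hω
      obtain ⟨m, hm⟩ := hω
      exact Set.mem_iUnion.mpr ⟨m, fun hc => hm hc⟩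
    refine le_antisymm ?_ (zero_le)
    calc P x (Gset Λ')ᶜ ≤ ∑' m : ℕ, P x {ω : ℕ → S | ∃ n, m < n ∧ ω n ∈ Λ'}ᶜ :=
          le_trans (measure_mono this) (measure_iUnion_le _)
      _ = 0 := by simp [hcompl]
  have := measure_compl (Gset_meas hΛ') (measure_ne_top (P x) _)
  rw [h1, measure_univ] at this
  exact le_antisymm prob_le_one (tsub_eq_zero_iff_le.mp this.symm)


section Part1
variable (P : S → Measure (ℕ → S)) (Λ Λ' : Set S) (n₁ : ℕ) (x : S)

/-- Event for the part-1 induction. -/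
def HmSet (Λ Λ' : Set S) (n₁ m : ℕ) : Set (ℕ → S) :=
  {ω : ℕ → S | ω 0 ∈ Λ' ∧ Good Λ' ((m+1)*n₁) ω ∧
    ∀ l, 1 ≤ l → l ≤ m*n₁ → ω (retTime Λ' ω l + n₁) ∉ Λ}

lemma HmSet_union (m : ℕ) :
    (⋃ n : ℕ, MSet Λ Λ' n₁ (m*n₁) ((m+1)*n₁) n) = HmSet Λ Λ' n₁ m := by
  ext ω
  simp only [Set.mem_iUnion, MSet, HmSet, Set.mem_setOf_eq]
  constructor
  · rintro ⟨n, ⟨hg, -⟩, h0, hf⟩; exact ⟨h0, hg, hf⟩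
  · rintro ⟨h0, hg, hf⟩; exact ⟨retTime Λ' ω ((m+1)*n₁), ⟨hg, rfl⟩, h0, hf⟩

lemma Hm_step (hΛm : MeasurableSet Λ) (hΛ'm : MeasurableSet Λ')
    (hMarkov : ∀ (x : S) (n : ℕ) (f : (ℕ → S) → ℝ≥0∞), Measurable f →
      ∀ g : (Fin (n + 1) → S) → ℝ≥0∞, Measurable g →
      (∫⁻ ω, g (fun k => ω k) * (∫⁻ ω', f ω' ∂(P (ω n))) ∂(P x))
        = ∫⁻ ω, g (fun k => ω k) * f (fun j => ω (n + j)) ∂(P x))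
    (hhalf : ∀ y ∈ Λ', P y {ω | ω n₁ ∉ Λ} ≤ 1 / 2) (hn₁ : 0 < n₁) (m : ℕ) :
    P x (HmSet Λ Λ' n₁ (m+1)) ≤ (1/2) * P x (HmSet Λ Λ' n₁ m) := by
  set A : ℕ → Set (ℕ → S) := fun n => MSet Λ Λ' n₁ (m*n₁) ((m+1)*n₁) n with hA
  have hAmem : ∀ n, MeasurableSet[Fn S n] (A n) := fun n =>
    MSet_mem hΛ'm hΛm (by ring_nf; omega)
  have hAm : ∀ n, MeasurableSet (A n) := fun n => Fn_le n _ (hAmem n)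
  have hAΛ' : ∀ n, ∀ ω ∈ A n, ω n ∈ Λ' := by
    rintro n ω ⟨⟨hg, hτ⟩, h0, -⟩
    have := hg.mem_of_pos (j := (m+1)*n₁) (Nat.mul_pos (Nat.succ_pos m) hn₁) le_rfl
    rwa [hτ] at this
  have hsub : HmSet Λ Λ' n₁ (m+1) ⊆ ⋃ n : ℕ, (A n ∩ {ω | ω (n + n₁) ∉ Λ}) := by
    rintro ω ⟨h0, hg, hf⟩
    refine Set.mem_iUnion.mpr ⟨retTime Λ' ω ((m+1)*n₁), ⟨⟨hg.mono ?_, rfl⟩, h0, ?_⟩, ?_⟩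
    · nlinarith
    · intro l h1 h2; exact hf l h1 (by nlinarith)
    · show ω (retTime Λ' ω ((m+1)*n₁) + n₁) ∉ Λ
      exact hf ((m+1)*n₁) (Nat.mul_pos (Nat.succ_pos m) hn₁) (by nlinarith)
  have hdisj : Pairwise (Function.onFun Disjoint A) := by
    intro i j hij
    rw [Function.onFun, Set.disjoint_left]
    rintro ω ⟨⟨-, hi⟩, -⟩ ⟨⟨-, hj⟩, -⟩
    exact hij (hi ▸ hj ▸ rfl)
  calc P x (HmSet Λ Λ' n₁ (m+1))
      ≤ ∑' n : ℕ, P x (A n ∩ {ω | ω (n + n₁) ∉ Λ}) :=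
        le_trans (measure_mono hsub) (measure_iUnion_le _)
    _ ≤ ∑' n : ℕ, (1/2) * P x (A n) := by
        refine ENNReal.tsum_le_tsum fun n => ?_
        exact halfStep P x hMarkov hΛm hhalf (hAmem n) (hAΛ' n)
    _ = (1/2) * ∑' n : ℕ, P x (A n) := ENNReal.tsum_mul_left
    _ = (1/2) * P x (HmSet Λ Λ' n₁ m) := by
        rw [← measure_iUnion hdisj hAm, HmSet_union]

lemma part1 (hΛm : MeasurableSet Λ) (hΛ'm : MeasurableSet Λ') (hP : ∀ y, IsProbabilityMeasure (P y))
    (hMarkov : ∀ (x : S) (n : ℕ) (f : (ℕ → S) → ℝ≥0∞), Measurable f →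
      ∀ g : (Fin (n + 1) → S) → ℝ≥0∞, Measurable g →
      (∫⁻ ω, g (fun k => ω k) * (∫⁻ ω', f ω' ∂(P (ω n))) ∂(P x))
        = ∫⁻ ω, g (fun k => ω k) * f (fun j => ω (n + j)) ∂(P x))
    (hstart : P x {ω | ω 0 = x} = 1)
    (hfin : ∀ y : S, P y {ω | ∃ n, 1 ≤ n ∧ ω n ∈ Λ'} = 1)
    (hhalf : ∀ y ∈ Λ', P y {ω | ω n₁ ∉ Λ} ≤ 1 / 2) (hn₁ : 0 < n₁) (hx : x ∈ Λ') (k : ℕ) :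
    P x {ω | ∀ l : ℕ, 1 ≤ l → l ≤ k → ω (retTime Λ' ω l + n₁) ∉ Λ}
      ≤ (1 / 2 : ℝ≥0∞) ^ (k / n₁) := by
  have hprob := hP x
  -- the a.s. set
  have hN : P x ({ω : ℕ → S | ω 0 ∈ Λ'} ∩ Gset Λ')ᶜ = 0 := by
    have h0m : MeasurableSet {ω : ℕ → S | ω 0 ∈ Λ'} := (measurable_pi_apply 0) hΛ'm
    have h01 : P x {ω : ℕ → S | ω 0 ∈ Λ'} = 1 := by
      refine le_antisymm prob_le_one ?_
      rw [← hstart]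
      exact measure_mono fun ω (hω : ω 0 = x) => by show ω 0 ∈ Λ'; rw [hω]; exact hx
    rw [Set.compl_inter]
    refine le_antisymm (le_trans (measure_union_le _ _) ?_) (zero_le)
    rw [measure_compl h0m (measure_ne_top _ _), h01,
      measure_compl (Gset_meas hΛ'm) (measure_ne_top _ _),
      Gset_ae P hP x hMarkov hΛ'm hfin, measure_univ]
    simp
  -- induction bound
  have hHm : ∀ m : ℕ, P x (HmSet Λ Λ' n₁ m) ≤ (1/2 : ℝ≥0∞) ^ m := by
    intro m
    induction m with
    | zero => simpa using prob_le_one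
    | succ m ih =>
      calc P x (HmSet Λ Λ' n₁ (m+1)) ≤ (1/2) * P x (HmSet Λ Λ' n₁ m) :=
            Hm_step P Λ Λ' n₁ x hΛm hΛ'm hMarkov hhalf hn₁ m
        _ ≤ (1/2) * (1/2:ℝ≥0∞)^m := by gcongr
        _ = (1/2:ℝ≥0∞)^(m+1) := by ring
  -- combine
  set E := {ω : ℕ → S | ∀ l : ℕ, 1 ≤ l → l ≤ k → ω (retTime Λ' ω l + n₁) ∉ Λ} with hE
  have hsub : E ∩ ({ω : ℕ → S | ω 0 ∈ Λ'} ∩ Gset Λ') ⊆ HmSet Λ Λ' n₁ (k / n₁) := by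
    rintro ω ⟨hωE, h0, hG⟩
    refine ⟨h0, Gset_good hG _, ?_⟩
    intro l h1 h2
    exact hωE l h1 (le_trans h2 (Nat.div_mul_le_self k n₁))
  calc P x E ≤ P x (E ∩ ({ω : ℕ → S | ω 0 ∈ Λ'} ∩ Gset Λ'))
        + P x (({ω : ℕ → S | ω 0 ∈ Λ'} ∩ Gset Λ')ᶜ) := by
        refine le_trans (measure_mono ?_) (measure_union_le _ _)
        intro ω hω
        by_cases h : ω ∈ {ω : ℕ → S | ω 0 ∈ Λ'} ∩ Gset Λ'
        · exact Or.inl ⟨hω, h⟩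
        · exact Or.inr h
    _ ≤ (1/2:ℝ≥0∞)^(k/n₁) + 0 := by
        rw [hN]
        gcongr
        exact le_trans (measure_mono hsub) (hHm _)
    _ = (1/2:ℝ≥0∞)^(k/n₁) := by simp

end Part1


lemma iInf_coe_sInf {T : Set ℕ} (h : T.Nonempty) :
    (⨅ n ∈ T, (n : ℝ≥0∞)) = ((sInf T : ℕ) : ℝ≥0∞) := by
  refine le_antisymm (iInf₂_le (sInf T) (Nat.sInf_mem h)) ?_
  exact le_iInf₂ fun n hn => Nat.cast_le.mpr (Nat.sInf_le hn)

/-- the one-step increment is dominated by the shifted first-return functional. -/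
lemma increment_le_fret {Λ' : Set S} {ω : ℕ → S} {l n : ℕ} (hτ : retTime Λ' ω l = n) :
    ((retTime Λ' ω (l+1) - retTime Λ' ω l : ℕ) : ℝ≥0∞) ≤ fret Λ' (fun j => ω (n + j)) := by
  set T : Set ℕ := {m | 1 ≤ m ∧ ω (n + m) ∈ Λ'} with hT
  have hfr : fret Λ' (fun j => ω (n + j)) = ⨅ m ∈ T, (m : ℝ≥0∞) := rfl
  set S' : Set ℕ := {i | retTime Λ' ω l + 1 ≤ i ∧ ω i ∈ Λ'} with hS'
  have hτ1 : retTime Λ' ω (l+1) = sInf S' := rfl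
  rcases Set.eq_empty_or_nonempty S' with hemp | hne
  · rw [hτ1, hemp, Nat.sInf_empty]
    simp
  · have hTne : T.Nonempty := by
      obtain ⟨i, hi1, hi2⟩ := hne
      refine ⟨i - n, by omega, ?_⟩
      have : n + (i - n) = i := by omega
      rw [this]; exact hi2
    rw [hfr, iInf_coe_sInf hTne]
    have hle : retTime Λ' ω (l+1) - retTime Λ' ω l ≤ sInf T := by
      obtain ⟨hm1, hm2⟩ := Nat.sInf_mem hTne
      have hmem : n + sInf T ∈ S' := ⟨by omega, hm2⟩
      have := Nat.sInf_le hmem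
      rw [hτ1]; omega
    exact_mod_cast hle

/-- telescoping sum of increments. -/
lemma telescope {Λ' : Set S} {ω : ℕ → S} (hg : ∀ k, Good Λ' k ω) (m : ℕ) :
    ∑ l ∈ Finset.range m, ((retTime Λ' ω (l+1) - retTime Λ' ω l : ℕ) : ℝ≥0∞)
      = (retTime Λ' ω m : ℝ≥0∞) := by
  have : ∑ l ∈ Finset.range m, (retTime Λ' ω (l+1) - retTime Λ' ω l) = retTime Λ' ω m := by
    induction m with
    | zero => simp [retTime]
    | succ m ih =>
      rw [Finset.sum_range_succ, ih]
      have h1 : retTime Λ' ω m < retTime Λ' ω (m+1) := hg (m+1) m (by omega)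
      omega
  rw [← this, Nat.cast_sum]

lemma good_self_le {Λ' : Set S} {ω : ℕ → S} (hg : ∀ k, Good Λ' k ω) (m : ℕ) :
    m ≤ retTime Λ' ω m := by
  have := (hg m).add_le (i := 0) (d := m) (by omega)
  simpa [retTime] using this

/-- termwise comparison with the RHS series. -/
lemma term_le {n₁ : ℕ} (hn₁ : 0 < n₁) (l : ℕ) :
    ((1:ℝ≥0∞)/2) ^ ((l - n₁) / n₁) ≤ (2:ℝ≥0∞) ^ (-(((l : ℤ) - (n₁ : ℤ)) / (n₁ : ℤ))) := by
  have h2 : (2:ℝ≥0∞) ≠ 0 := by norm_num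
  have h2' : (2:ℝ≥0∞) ≠ ⊤ := by norm_num
  by_cases h : n₁ ≤ l
  · have hcast : ((l : ℤ) - (n₁ : ℤ)) = ((l - n₁ : ℕ) : ℤ) := by omega
    rw [hcast]
    have hdiv : (((l - n₁ : ℕ) : ℤ)) / ((n₁ : ℕ) : ℤ) = (((l - n₁) / n₁ : ℕ) : ℤ) :=
      by exact_mod_cast (Int.natCast_ediv _ _).symm
    rw [hdiv, ENNReal.zpow_neg, zpow_natCast]
    rw [one_div, ENNReal.inv_pow]
  · have hl : l < n₁ := by omega
    have hnat : (l - n₁) / n₁ = 0 := by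
      have : l - n₁ = 0 := by omega
      simp [this]
    rw [hnat, pow_zero]
    have hdiv : ((l : ℤ) - (n₁ : ℤ)) / ((n₁ : ℤ)) = -1 := by
      have h1 : ((l : ℤ) - (n₁ : ℤ)) = (l : ℤ) + (n₁ : ℤ) * (-1) := by ring
      rw [h1, Int.add_mul_ediv_left _ _ (by omega : (n₁:ℤ) ≠ 0)]
      rw [Int.ediv_eq_zero_of_lt (by omega) (by omega)]
      norm_num
    rw [hdiv]
    have : (2:ℝ≥0∞) ^ (-(-1 : ℤ)) = 2 := by norm_num
    rw [this]
    exact one_le_two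

/-- measurability of the `Fail` event. -/
lemma measurable_fail {Λ Λ' : Set S} (hΛ' : MeasurableSet Λ') (hΛ : MeasurableSet Λ)
    (n₁ j : ℕ) : MeasurableSet {ω : ℕ → S | ω (retTime Λ' ω j + n₁) ∉ Λ} := by
  have : {ω : ℕ → S | ω (retTime Λ' ω j + n₁) ∉ Λ}
      = ⋃ t : ℕ, ((fun ω : ℕ → S => retTime Λ' ω j) ⁻¹' {t}) ∩ {ω : ℕ → S | ω (t + n₁) ∈ Λ}ᶜ := by
    ext ω
    simp only [Set.mem_setOf_eq, Set.mem_iUnion, Set.mem_inter_iff, Set.mem_preimage,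
      Set.mem_singleton_iff, Set.mem_compl_iff]
    constructor
    · intro h; exact ⟨retTime Λ' ω j, rfl, h⟩
    · rintro ⟨t, rfl, h⟩; exact h
  rw [this]
  exact MeasurableSet.iUnion fun t =>
    ((measurable_retTime Λ' hΛ' j) (MeasurableSet.singleton t)).inter
      ((measurable_pi_apply (t + n₁)) hΛ).compl

/-- measurability of the increment function. -/
lemma measurable_increment {Λ' : Set S} (hΛ' : MeasurableSet Λ') (l : ℕ) :
    Measurable (fun ω : ℕ → S => ((retTime Λ' ω (l+1) - retTime Λ' ω l : ℕ) : ℝ≥0∞)) := by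
  have h1 : Measurable (fun ω : ℕ → S => retTime Λ' ω (l+1) - retTime Λ' ω l) := by
    apply measurable_to_countable'
    intro n
    have : (fun ω : ℕ → S => retTime Λ' ω (l+1) - retTime Λ' ω l) ⁻¹' {n}
        = ⋃ a : ℕ, ⋃ b : ℕ, ⋃ (_ : a - b = n),
          (((fun ω : ℕ → S => retTime Λ' ω (l+1)) ⁻¹' {a}) ∩
            ((fun ω : ℕ → S => retTime Λ' ω l) ⁻¹' {b})) := by
      ext ω
      simp only [Set.mem_preimage, Set.mem_singleton_iff, Set.mem_iUnion, Set.mem_inter_iff]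
      constructor
      · intro h; exact ⟨retTime Λ' ω (l+1), retTime Λ' ω l, h, rfl, rfl⟩
      · rintro ⟨a, b, h, rfl, rfl⟩; exact h
    rw [this]
    exact MeasurableSet.iUnion fun a => MeasurableSet.iUnion fun b =>
      MeasurableSet.iUnion fun _ =>
        ((measurable_retTime Λ' hΛ' (l+1)) (MeasurableSet.singleton a)).inter
          ((measurable_retTime Λ' hΛ' l) (MeasurableSet.singleton b))
  exact measurable_from_top.comp h1


lemma part2 (P : S → Measure (ℕ → S)) (Λ Λ' : Set S) (n₁ : ℕ) (x : S)
    (hΛm : MeasurableSet Λ) (hΛ'm : MeasurableSet Λ') (hP : ∀ y, IsProbabilityMeasure (P y))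
    (hMarkov : ∀ (x : S) (n : ℕ) (f : (ℕ → S) → ℝ≥0∞), Measurable f →
      ∀ g : (Fin (n + 1) → S) → ℝ≥0∞, Measurable g →
      (∫⁻ ω, g (fun k => ω k) * (∫⁻ ω', f ω' ∂(P (ω n))) ∂(P x))
        = ∫⁻ ω, g (fun k => ω k) * f (fun j => ω (n + j)) ∂(P x))
    (hstart : P x {ω | ω 0 = x} = 1)
    (hfin : ∀ y : S, P y {ω | ∃ n, 1 ≤ n ∧ ω n ∈ Λ'} = 1)
    (hhalf : ∀ y ∈ Λ', P y {ω | ω n₁ ∉ Λ} ≤ 1 / 2) (hn₁ : 0 < n₁) (hx : x ∈ Λ')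
    {C : ℝ≥0∞} (hret : ∀ y ∈ Λ', (∫⁻ ω, fret Λ' ω ∂(P y)) ≤ C) :
    (∫⁻ ω, (⨅ k ∈ {k : ℕ | 1 ≤ k ∧ ω (retTime Λ' ω k + n₁) ∈ Λ},
        (retTime Λ' ω k : ℝ≥0∞)) ∂(P x))
      ≤ C * ∑' l : ℕ, (2 : ℝ≥0∞) ^ (-(((l : ℤ) - (n₁ : ℤ)) / (n₁ : ℤ))) := by
  have hprob := hP x
  set X : (ℕ → S) → ℝ≥0∞ := fun ω => ⨅ k ∈ {k : ℕ | 1 ≤ k ∧ ω (retTime Λ' ω k + n₁) ∈ Λ},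
      (retTime Λ' ω k : ℝ≥0∞) with hX
  set N : Set (ℕ → S) := {ω : ℕ → S | ω 0 ∈ Λ'} ∩ Gset Λ' with hNdef
  have hNm : MeasurableSet N := ((measurable_pi_apply 0) hΛ'm).inter (Gset_meas hΛ'm)
  have hNc : P x Nᶜ = 0 := by
    have h0m : MeasurableSet {ω : ℕ → S | ω 0 ∈ Λ'} := (measurable_pi_apply 0) hΛ'm
    have h01 : P x {ω : ℕ → S | ω 0 ∈ Λ'} = 1 := by
      refine le_antisymm prob_le_one ?_
      rw [← hstart]
      exact measure_mono fun ω (hω : ω 0 = x) => by show ω 0 ∈ Λ'; rw [hω]; exact hx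
    rw [hNdef, Set.compl_inter]
    refine le_antisymm (le_trans (measure_union_le _ _) ?_) (zero_le)
    rw [measure_compl h0m (measure_ne_top _ _), h01,
      measure_compl (Gset_meas hΛ'm) (measure_ne_top _ _),
      Gset_ae P hP x hMarkov hΛ'm hfin, measure_univ]
    simp
  -- events and increments
  set E : ℕ → Set (ℕ → S) :=
    fun b => {ω : ℕ → S | ∀ j, 1 ≤ j → j ≤ b → ω (retTime Λ' ω j + n₁) ∉ Λ} with hE
  have hEm : ∀ b, MeasurableSet (E b) := by
    intro b
    have : E b = ⋂ j : ℕ, ⋂ (_ : 1 ≤ j), ⋂ (_ : j ≤ b),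
        {ω : ℕ → S | ω (retTime Λ' ω j + n₁) ∉ Λ} := by
      ext ω; simp [hE]
    rw [this]
    exact MeasurableSet.iInter fun j => MeasurableSet.iInter fun _ =>
      MeasurableSet.iInter fun _ => measurable_fail hΛ'm hΛm n₁ j
  set g : ℕ → (ℕ → S) → ℝ≥0∞ := fun l =>
    (E l).indicator (fun ω => ((retTime Λ' ω (l+1) - retTime Λ' ω l : ℕ) : ℝ≥0∞)) with hg
  have hgm : ∀ l, Measurable (g l) := fun l =>
    (measurable_increment hΛ'm l).indicator (hEm l)
  -- pointwise bound on N
  have hpoint : ∀ ω ∈ N, X ω ≤ ∑' l : ℕ, g l ω := by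
    rintro ω ⟨h0, hG⟩
    have hGood : ∀ k, Good Λ' k ω := Gset_good hG
    by_cases hK : {k : ℕ | 1 ≤ k ∧ ω (retTime Λ' ω k + n₁) ∈ Λ}.Nonempty
    · set ks := sInf {k : ℕ | 1 ≤ k ∧ ω (retTime Λ' ω k + n₁) ∈ Λ} with hks
      have hmem := Nat.sInf_mem hK
      have hXle : X ω ≤ (retTime Λ' ω ks : ℝ≥0∞) := iInf₂_le ks hmem
      have hEl : ∀ l < ks, ω ∈ E l := by
        intro l hl j hj1 hj2
        intro hc
        have : j ∈ {k : ℕ | 1 ≤ k ∧ ω (retTime Λ' ω k + n₁) ∈ Λ} := ⟨hj1, hc⟩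
        have := Nat.sInf_le this
        omega
      have hsum : ∑ l ∈ Finset.range ks, g l ω = (retTime Λ' ω ks : ℝ≥0∞) := by
        rw [← telescope hGood ks]
        refine Finset.sum_congr rfl fun l hl => ?_
        rw [hg]
        exact Set.indicator_of_mem (hEl l (Finset.mem_range.mp hl)) _
      exact hXle.trans (hsum ▸ ENNReal.sum_le_tsum _)
    · have hEall : ∀ l, ω ∈ E l := by
        intro l j hj1 hj2 hc
        exact hK ⟨j, hj1, hc⟩
      have hbig : ∀ m : ℕ, (m : ℝ≥0∞) ≤ ∑' l : ℕ, g l ω := by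
        intro m
        calc (m : ℝ≥0∞) ≤ (retTime Λ' ω m : ℝ≥0∞) := by exact_mod_cast good_self_le hGood m
          _ = ∑ l ∈ Finset.range m,
              ((retTime Λ' ω (l+1) - retTime Λ' ω l : ℕ) : ℝ≥0∞) := (telescope hGood m).symm
          _ = ∑ l ∈ Finset.range m, g l ω := by
              refine Finset.sum_congr rfl fun l _ => ?_
              rw [hg]
              exact (Set.indicator_of_mem (hEall l)
                (fun ω => ((retTime Λ' ω (l+1) - retTime Λ' ω l : ℕ) : ℝ≥0∞))).symm
          _ ≤ ∑' l : ℕ, g l ω := ENNReal.sum_le_tsum _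
      have htop : ∑' l : ℕ, g l ω = ⊤ := by
        refine top_unique ?_
        rw [← ENNReal.iSup_natCast]
        exact iSup_le hbig
      rw [htop]; exact le_top
  -- main computation
  have hsplit : ∫⁻ ω, X ω ∂(P x) = ∫⁻ ω in N, X ω ∂(P x) + ∫⁻ ω in Nᶜ, X ω ∂(P x) := by
    rw [← lintegral_add_measure, Measure.restrict_add_restrict_compl hNm]
  have hzero : ∫⁻ ω in Nᶜ, X ω ∂(P x) = 0 := by
    have : (P x).restrict Nᶜ = 0 := Measure.restrict_eq_zero.mpr hNc
    rw [this, lintegral_zero_measure]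
  -- the per-term bound
  have hterm : ∀ l : ℕ, ∫⁻ ω in N, g l ω ∂(P x) ≤ C * (1/2 : ℝ≥0∞)^((l - n₁)/n₁) := by
    intro l
    have e1 : ∫⁻ ω in N, g l ω ∂(P x)
        = ∫⁻ ω in E l ∩ N, ((retTime Λ' ω (l+1) - retTime Λ' ω l : ℕ) : ℝ≥0∞) ∂(P x) := by
      rw [hg, lintegral_indicator (hEm l), Measure.restrict_restrict (hEm l)]
    set A : ℕ → Set (ℕ → S) := fun n => MSet Λ Λ' n₁ (l - n₁) l n with hA
    have hbl : ∀ j, 1 ≤ j → j ≤ l - n₁ → j + n₁ ≤ l := by intro j h1 h2; omega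
    have hAmem : ∀ n, MeasurableSet[Fn S n] (A n) := fun n => MSet_mem hΛ'm hΛm hbl
    have hAm : ∀ n, MeasurableSet (A n) := fun n => Fn_le n _ (hAmem n)
    have hAdisj : Pairwise (Function.onFun Disjoint A) := by
      intro i j hij
      rw [Function.onFun, Set.disjoint_left]
      rintro ω ⟨⟨-, hi⟩, -⟩ ⟨⟨-, hj⟩, -⟩
      exact hij (hi ▸ hj ▸ rfl)
    have hsub : E l ∩ N ⊆ ⋃ n : ℕ, A n := by
      rintro ω ⟨hωE, h0, hG⟩
      refine Set.mem_iUnion.mpr ⟨retTime Λ' ω l, ⟨Gset_good hG l, rfl⟩, h0, ?_⟩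
      intro j hj1 hj2
      exact hωE j hj1 (by omega)
    have hAΛ' : ∀ n, ∀ ω ∈ A n, ω n ∈ Λ' := by
      rintro n ω ⟨⟨hg', hτ⟩, h0, -⟩
      rcases Nat.eq_zero_or_pos l with rfl | hl
      · have : retTime Λ' ω 0 = 0 := rfl
        rw [this] at hτ
        rw [← hτ]; exact h0
      · have := hg'.mem_of_pos hl le_rfl
        rwa [hτ] at this
    calc ∫⁻ ω in N, g l ω ∂(P x)
        = ∫⁻ ω in E l ∩ N, ((retTime Λ' ω (l+1) - retTime Λ' ω l : ℕ) : ℝ≥0∞) ∂(P x) := e1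
      _ ≤ ∫⁻ ω in ⋃ n : ℕ, A n,
            ((retTime Λ' ω (l+1) - retTime Λ' ω l : ℕ) : ℝ≥0∞) ∂(P x) :=
          lintegral_mono_set hsub
      _ = ∑' n : ℕ, ∫⁻ ω in A n,
            ((retTime Λ' ω (l+1) - retTime Λ' ω l : ℕ) : ℝ≥0∞) ∂(P x) :=
          lintegral_iUnion hAm hAdisj _
      _ ≤ ∑' n : ℕ, ∫⁻ ω in A n, fret Λ' (fun j => ω (n + j)) ∂(P x) := by
          refine ENNReal.tsum_le_tsum fun n => ?_
          refine setLIntegral_mono' (hAm n) fun ω hω => ?_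
          exact increment_le_fret hω.1.2
      _ ≤ ∑' n : ℕ, C * P x (A n) := by
          refine ENNReal.tsum_le_tsum fun n => ?_
          exact retStep P x hMarkov hΛ'm hret (hAmem n) (hAΛ' n)
      _ = C * P x (⋃ n : ℕ, A n) := by
          rw [ENNReal.tsum_mul_left, measure_iUnion hAdisj hAm]
      _ ≤ C * (1/2 : ℝ≥0∞)^((l - n₁)/n₁) := by
          gcongr
          have hWE : (⋃ n : ℕ, A n) ⊆ E (l - n₁) := by
            rintro ω ⟨_, ⟨n, rfl⟩, ⟨-, h0, hf⟩⟩
            exact hf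
          refine le_trans (measure_mono hWE) ?_
          exact part1 P Λ Λ' n₁ x hΛm hΛ'm hP hMarkov hstart hfin hhalf hn₁ hx (l - n₁)
  -- put everything together
  calc ∫⁻ ω, X ω ∂(P x) = ∫⁻ ω in N, X ω ∂(P x) + ∫⁻ ω in Nᶜ, X ω ∂(P x) := hsplit
    _ = ∫⁻ ω in N, X ω ∂(P x) := by rw [hzero, add_zero]
    _ ≤ ∫⁻ ω in N, (∑' l : ℕ, g l ω) ∂(P x) :=
        setLIntegral_mono (Measurable.ennreal_tsum hgm) hpoint
    _ = ∑' l : ℕ, ∫⁻ ω in N, g l ω ∂(P x) :=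
        lintegral_tsum fun l => (hgm l).aemeasurable
    _ ≤ ∑' l : ℕ, C * (1/2 : ℝ≥0∞)^((l - n₁)/n₁) := ENNReal.tsum_le_tsum hterm
    _ = C * ∑' l : ℕ, (1/2 : ℝ≥0∞)^((l - n₁)/n₁) := ENNReal.tsum_mul_left
    _ ≤ C * ∑' l : ℕ, (2 : ℝ≥0∞) ^ (-(((l : ℤ) - (n₁ : ℤ)) / (n₁ : ℤ))) := by
        refine mul_le_mul_right (ENNReal.tsum_le_tsum fun l => ?_) C
        exact term_le hn₁ l


end StrongAux


/-- Let `(Y_n)` be a Markov chain on `S` with laws `P x` started at `x`. Suppose returns to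
`Λ'` have expectation at most `C` uniformly over starting points in `Λ'` and are a.s. finite,
and from any point of `Λ'` the chain is in `Λ ⊆ Λ'` after `n₁` steps with probability `≥ 1/2`.
Let `τ(k)` be the `k`-th return time to `Λ'` and `k* = inf {k ≥ 1 : Y_{τ(k)+n₁} ∈ Λ}`. Then
for `x ∈ Λ'`: `P_x(k* > k) ≤ 2^{-⌊k/n₁⌋}` for all `k`, and
`E_x[τ(k*)] ≤ C Σ_{ℓ≥1} 2^{-⌊(ℓ-1-n₁)/n₁⌋} < ∞`. -/
theorem stmt_18 {S : Type*} [MeasurableSpace S]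
    (P : S → Measure (ℕ → S)) (hP : ∀ x, IsProbabilityMeasure (P x))
    (hstart : ∀ x, P x {ω | ω 0 = x} = 1)
    (hMarkov : ∀ (x : S) (n : ℕ) (f : (ℕ → S) → ℝ≥0∞), Measurable f →
      ∀ g : (Fin (n + 1) → S) → ℝ≥0∞, Measurable g →
      (∫⁻ ω, g (fun k => ω k) * (∫⁻ ω', f ω' ∂(P (ω n))) ∂(P x))
        = ∫⁻ ω, g (fun k => ω k) * f (fun j => ω (n + j)) ∂(P x))
    (Λ Λ' : Set S) (hΛm : MeasurableSet Λ) (hΛ'm : MeasurableSet Λ') (hsub : Λ ⊆ Λ')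
    (C : ℝ≥0∞) (hC : C ≠ ⊤)
    (hret : ∀ x ∈ Λ', (∫⁻ ω, (⨅ n ∈ {n : ℕ | 1 ≤ n ∧ ω n ∈ Λ'}, (n : ℝ≥0∞)) ∂(P x)) ≤ C)
    (hfin : ∀ x : S, P x {ω | ∃ n, 1 ≤ n ∧ ω n ∈ Λ'} = 1)
    (n₁ : ℕ) (hn₁ : 0 < n₁)
    (hhalf : ∀ x ∈ Λ', P x {ω | ω n₁ ∉ Λ} ≤ 1 / 2)
    (x : S) (hx : x ∈ Λ') :
    (∀ k : ℕ, P x {ω | ∀ l : ℕ, 1 ≤ l → l ≤ k → ω (retTime Λ' ω l + n₁) ∉ Λ}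
        ≤ (1 / 2 : ℝ≥0∞) ^ (k / n₁)) ∧
    (∫⁻ ω, (⨅ k ∈ {k : ℕ | 1 ≤ k ∧ ω (retTime Λ' ω k + n₁) ∈ Λ},
        (retTime Λ' ω k : ℝ≥0∞)) ∂(P x))
      ≤ C * ∑' l : ℕ, (2 : ℝ≥0∞) ^ (-(((l : ℤ) - (n₁ : ℤ)) / (n₁ : ℤ))) := by
  constructor
  · intro k
    exact StrongAux.part1 P Λ Λ' n₁ x hΛm hΛ'm hP (hMarkov) (hstart x) hfin hhalf hn₁ hx k
  · exact StrongAux.part2 P Λ Λ' n₁ x hΛm hΛ'm hP (hMarkov) (hstart x) hfin hhalf hn₁ hx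
      (fun y hy => hret y hy)
end
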